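/- arXiv:1709.02673 — 4 statements merged into one kernel-verified Lean document; each statement's English description precedes it below -/
import Mathlib

section
/- Under the combining setup with ψ of Fisher type, assume that (ii) there exists j0 ∈ {1,…,r} such that P(T_{n,j0}^{[1]} ≥ T_{n,j0}) → 0 as n → ∞, and (iii) for every n, almost surely, for each j ∈ {1,…,r} the bootstrap replicates T_{n,j}^{[1]}, …, T_{n,j}^{[M_n]} are pairwise distinct. Then the global approximate p-value p_{n,M_n}(W_{n,M_n}^{[0]}) = (1/M_n) Σ_{k=1}^{M_n} 1(W_{n,M_n}^{[k]} ≥ W_{n,M_n}^{[0]}) converges to 0 in probability as n → ∞. -/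
open MeasureTheory ProbabilityTheory Filter Topology
open scoped ENNReal

lemma stmt4_key {r : ℕ} (w : Fin r → ℝ) (hw : ∀ j, 0 < w j) (φ : ℝ → ℝ)
    (hφanti : StrictAntiOn φ (Set.Ioo (0 : ℝ) 1))
    (hφpos : ∀ x ∈ Set.Ioo (0 : ℝ) 1, 0 < φ x)
    (j0 : Fin r) (M : ℕ) (hM1 : 1 ≤ M)
    (T : ℕ → Fin r → ℝ)
    (hties : ∀ j : Fin r, ∀ k ∈ Finset.Icc 1 M, ∀ l ∈ Finset.Icc 1 M,
        k ≠ l → T k j ≠ T l j)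
    (ε' δ : ℝ) (hε' : ε' ∈ Set.Ioo (0 : ℝ) 1) (hδ : δ ∈ Set.Ioo (0 : ℝ) 1)
    (hφδ : φ δ * (w j0 / ∑ j, w j) = φ ε')
    (hp0 : (1 / ((M : ℝ) + 1)) * (1 / 2 + ∑ l ∈ Finset.Icc 1 M,
        if T 0 j0 ≤ T l j0 then (1 : ℝ) else 0) ≤ δ) :
    (∑ k ∈ Finset.Icc 1 M,
      if (∑ j, w j * φ ((1 / ((M : ℝ) + 1)) * (1 / 2 + ∑ l ∈ Finset.Icc 1 M,
            if T 0 j ≤ T l j then (1 : ℝ) else 0)))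
          ≤ (∑ j, w j * φ ((1 / ((M : ℝ) + 1)) * (1 / 2 + ∑ l ∈ Finset.Icc 1 M,
            if T k j ≤ T l j then (1 : ℝ) else 0)))
        then (1 : ℝ) else 0) ≤ r * (ε' * ((M : ℝ) + 1)) := by
  have hM1' : (1 : ℝ) ≤ M := by exact_mod_cast hM1
  have hMpos : (0 : ℝ) < (M : ℝ) + 1 := by linarith
  set p : ℕ → Fin r → ℝ := fun i j => (1 / ((M : ℝ) + 1)) * (1 / 2 + ∑ l ∈ Finset.Icc 1 M,
      if T i j ≤ T l j then (1 : ℝ) else 0) with hp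
  set W : ℕ → ℝ := fun i => ∑ j, w j * φ (p i j) with hW
  set N : ℕ → Fin r → ℕ := fun i j => ((Finset.Icc 1 M).filter (fun l => T i j ≤ T l j)).card
    with hN
  have hNsum : ∀ i j, (∑ l ∈ Finset.Icc 1 M, if T i j ≤ T l j then (1 : ℝ) else 0)
      = (N i j : ℝ) := by
    intro i j; rw [Finset.sum_boole]
  have hNle : ∀ i j, N i j ≤ M := by
    intro i j
    calc N i j ≤ (Finset.Icc 1 M).card := Finset.card_filter_le _ _
      _ = M := by simp
  have hpmem : ∀ i j, p i j ∈ Set.Ioo (0 : ℝ) 1 := by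
    intro i j
    have h0 : (0 : ℝ) ≤ (N i j : ℝ) := Nat.cast_nonneg _
    have h1 : (N i j : ℝ) ≤ M := by exact_mod_cast hNle i j
    constructor
    · rw [hp]; dsimp only; rw [hNsum i j]; positivity
    · rw [hp]; dsimp only; rw [hNsum i j]
      rw [div_mul_eq_mul_div, one_mul, div_lt_one hMpos]
      linarith
  have hwsum : 0 < ∑ j, w j :=
    Finset.sum_pos (fun j _ => hw j) ⟨j0, Finset.mem_univ _⟩
  have hc : 0 < w j0 / ∑ j, w j := div_pos (hw j0) hwsum
  have hφε' : 0 < φ ε' := hφpos ε' hε'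
  -- Step A
  have hφp0 : φ ε' ≤ (w j0 / ∑ j, w j) * φ (p 0 j0) := by
    have hple : p 0 j0 ≤ δ := hp0
    have hφge : φ δ ≤ φ (p 0 j0) := by
      rcases eq_or_lt_of_le hple with h | h
      · rw [h]
      · exact (hφanti (hpmem 0 j0) hδ h).le
    calc φ ε' = φ δ * (w j0 / ∑ j, w j) := hφδ.symm
      _ ≤ φ (p 0 j0) * (w j0 / ∑ j, w j) := by
          exact mul_le_mul_of_nonneg_right hφge hc.le
      _ = (w j0 / ∑ j, w j) * φ (p 0 j0) := mul_comm _ _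
  -- Step B
  have hB : ∀ k, W 0 ≤ W k → ∃ j, p k j ≤ ε' := by
    intro k hWk
    have hj : ∃ j, φ ε' ≤ φ (p k j) := by
      by_contra h
      push_neg at h
      have hWklt : W k < W 0 := by
        have h1 : W k < ∑ j : Fin r, w j * ((w j0 / ∑ j, w j) * φ (p 0 j0)) := by
          apply Finset.sum_lt_sum_of_nonempty ⟨j0, Finset.mem_univ _⟩
          intro j _
          exact mul_lt_mul_of_pos_left (lt_of_lt_of_le (h j) hφp0) (hw j)
        have h2 : ∑ j : Fin r, w j * ((w j0 / ∑ j, w j) * φ (p 0 j0))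
            = w j0 * φ (p 0 j0) := by
          rw [← Finset.sum_mul]
          field_simp
        have h3 : w j0 * φ (p 0 j0) ≤ W 0 := by
          apply Finset.single_le_sum (f := fun j => w j * φ (p 0 j)) _ (Finset.mem_univ j0)
          intro j _
          exact mul_nonneg (hw j).le (hφpos _ (hpmem 0 j)).le
        linarith
      exact absurd hWk hWklt.not_ge
    obtain ⟨j, hj⟩ := hj
    refine ⟨j, ?_⟩
    by_contra h
    push_neg at h
    exact absurd hj (hφanti hε' (hpmem k j) h).not_ge
  -- Step C
  set s : ℕ := ⌊ε' * ((M : ℝ) + 1)⌋₊ with hs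
  have hC : ∀ k j, p k j ≤ ε' → N k j ≤ s := by
    intro k j hpk
    apply Nat.le_floor
    have : (1 / ((M : ℝ) + 1)) * (1 / 2 + (N k j : ℝ)) ≤ ε' := by
      rw [← hNsum k j]; exact hpk
    rw [div_mul_eq_mul_div, one_mul, div_le_iff₀ hMpos] at this
    linarith
  -- Step D
  have hD : ∀ j : Fin r, ((Finset.Icc 1 M).filter (fun k => N k j ≤ s)).card ≤ s := by
    intro j
    have hmaps : ∀ k ∈ (Finset.Icc 1 M).filter (fun k => N k j ≤ s),
        N k j ∈ Finset.Icc 1 s := by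
      intro k hk
      rw [Finset.mem_filter] at hk
      refine Finset.mem_Icc.mpr ⟨?_, hk.2⟩
      have : k ∈ (Finset.Icc 1 M).filter (fun l => T k j ≤ T l j) :=
        Finset.mem_filter.mpr ⟨hk.1, le_refl _⟩
      exact Finset.card_pos.mpr ⟨k, this⟩
    have hinj : Set.InjOn (fun k => N k j)
        ((Finset.Icc 1 M).filter (fun k => N k j ≤ s)) := by
      intro k hk l hl hkl
      simp only [Finset.coe_filter, Set.mem_setOf_eq] at hk hl
      by_contra hne
      have hT : T k j ≠ T l j := hties j k hk.1 l hl.1 hne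
      -- wlog via a general claim
      have key : ∀ a b : ℕ, a ∈ Finset.Icc 1 M → b ∈ Finset.Icc 1 M →
          T a j < T b j → N b j < N a j := by
        intro a b ha hb hab
        apply Finset.card_lt_card
        rw [Finset.ssubset_iff_of_subset]
        · exact ⟨a, Finset.mem_filter.mpr ⟨ha, le_refl _⟩,
            fun hmem => absurd (Finset.mem_filter.mp hmem).2 (not_le.mpr hab)⟩
        · intro m hm
          rw [Finset.mem_filter] at hm ⊢
          exact ⟨hm.1, hab.le.trans hm.2⟩
      rcases lt_or_gt_of_ne hT with h | h
      · exact absurd hkl (key k l hk.1 hl.1 h).ne'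
      · exact absurd hkl.symm (key l k hl.1 hk.1 h).ne'
    calc ((Finset.Icc 1 M).filter (fun k => N k j ≤ s)).card
        ≤ (Finset.Icc 1 s).card := Finset.card_le_card_of_injOn _ hmaps hinj
      _ = s := by simp
  -- Step E
  have hcount : (∑ k ∈ Finset.Icc 1 M, if W 0 ≤ W k then (1 : ℝ) else 0)
      = (((Finset.Icc 1 M).filter (fun k => W 0 ≤ W k)).card : ℝ) := by
    rw [Finset.sum_boole]
  have hsub : (Finset.Icc 1 M).filter (fun k => W 0 ≤ W k) ⊆
      Finset.univ.biUnion (fun j : Fin r =>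
        (Finset.Icc 1 M).filter (fun k => N k j ≤ s)) := by
    intro k hk
    rw [Finset.mem_filter] at hk
    obtain ⟨j, hj⟩ := hB k hk.2
    exact Finset.mem_biUnion.mpr ⟨j, Finset.mem_univ _,
      Finset.mem_filter.mpr ⟨hk.1, hC k j hj⟩⟩
  have hcard : ((Finset.Icc 1 M).filter (fun k => W 0 ≤ W k)).card ≤ r * s := by
    calc ((Finset.Icc 1 M).filter (fun k => W 0 ≤ W k)).card
        ≤ (Finset.univ.biUnion (fun j : Fin r =>
            (Finset.Icc 1 M).filter (fun k => N k j ≤ s))).card :=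
          Finset.card_le_card hsub
      _ ≤ ∑ j : Fin r, ((Finset.Icc 1 M).filter (fun k => N k j ≤ s)).card :=
          Finset.card_biUnion_le
      _ ≤ ∑ _j : Fin r, s := Finset.sum_le_sum (fun j _ => hD j)
      _ = r * s := by simp [Finset.sum_const, mul_comm]
  have hsle : (s : ℝ) ≤ ε' * ((M : ℝ) + 1) := Nat.floor_le (mul_nonneg hε'.1.le hMpos.le)
  show (∑ k ∈ Finset.Icc 1 M, if W 0 ≤ W k then (1 : ℝ) else 0) ≤ _
  rw [hcount]
  calc (((Finset.Icc 1 M).filter (fun k => W 0 ≤ W k)).card : ℝ)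
      ≤ ((r * s : ℕ) : ℝ) := by exact_mod_cast hcard
    _ = (r : ℝ) * (s : ℝ) := by push_cast; ring
    _ ≤ r * (ε' * ((M : ℝ) + 1)) := by
        exact mul_le_mul_of_nonneg_left hsle (Nat.cast_nonneg _)

/-- In the combining setup with a Fisher-type combining function
`ψ(p_1,…,p_r) = Σ_j w_j φ(p_j)` (`w_j > 0`, `φ : (0,1) → (0,∞)` a decreasing bijection),
if (ii) there is a `j0` with `P(T_{n,j0}^{[1]} ≥ T_{n,j0}) → 0`, and (iii) for every `n`,
almost surely and for each `j`, the bootstrap replicates `T_{n,j}^{[1]}, …, T_{n,j}^{[M_n]}`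
are pairwise distinct, then the global approximate p-value
`p_{n,M_n}(W_{n,M_n}^{[0]}) = (1/M_n) Σ_{k=1}^{M_n} 1(W_{n,M_n}^{[k]} ≥ W_{n,M_n}^{[0]})`
converges to `0` in probability. -/
theorem stmt4
    {Ω : Type*} [MeasurableSpace Ω] (P : Measure Ω) [IsProbabilityMeasure P]
    (r : ℕ) (hr : 1 ≤ r)
    (𝒳 𝒱 : ℕ → Type*) [∀ n, MeasurableSpace (𝒳 n)] [∀ n, MeasurableSpace (𝒱 n)]
    (X : ∀ n, Ω → 𝒳 n) (hXmeas : ∀ n, Measurable (X n))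
    (ν : ∀ n, Measure (𝒱 n)) [∀ n, IsProbabilityMeasure (ν n)]
    (V : ∀ n, ℕ → Ω → 𝒱 n) (hVmeas : ∀ n i, Measurable (V n i))
    (hVlaw : ∀ n i, 1 ≤ i → Measure.map (V n i) P = ν n)
    (hViid : ∀ n, iIndepFun
        (fun i => V n (i + 1)) P)
    (hVindepX : ∀ n, IndepFun (X n) (fun ω (i : ℕ) => V n (i + 1) ω) P)
    (f : ∀ n, 𝒳 n → (Fin r → ℝ)) (hf : ∀ n, Measurable (f n))
    (g : ∀ n, 𝒳 n × 𝒱 n → (Fin r → ℝ)) (hg : ∀ n, Measurable (g n))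
    (Trep : ℕ → ℕ → Ω → (Fin r → ℝ))
    (hTrep : ∀ n i ω, Trep n i ω = if i = 0 then f n (X n ω) else g n (X n ω, V n i ω))
    (M : ℕ → ℕ) (hM : ∀ n, 1 ≤ M n) (hMtop : Tendsto M atTop atTop)
    -- ψ of Fisher type: strictly positive weights and a decreasing bijection
    -- φ : (0,1) → (0,∞), so ψ(p) = Σ_j w_j φ(p_j)
    (w : Fin r → ℝ) (hw : ∀ j, 0 < w j)
    (φ : ℝ → ℝ)
    (hφanti : StrictAntiOn φ (Set.Ioo (0 : ℝ) 1))
    (hφbij : Set.BijOn φ (Set.Ioo (0 : ℝ) 1) (Set.Ioi (0 : ℝ)))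
    -- (ii) there exists j0 such that P(T_{n,j0}^{[1]} ≥ T_{n,j0}) → 0
    (j0 : Fin r)
    (hj0 : Tendsto (fun n => (P {ω | Trep n 0 ω j0 ≤ Trep n 1 ω j0}).toReal)
        atTop (𝓝 0))
    -- (iii) no ties among the bootstrap replicates
    (hties : ∀ n, ∀ᵐ ω ∂P, ∀ j : Fin r, ∀ k ∈ Finset.Icc 1 (M n), ∀ l ∈ Finset.Icc 1 (M n),
        k ≠ l → Trep n k ω j ≠ Trep n l ω j) :
    ∀ ε : ℝ, 0 < ε →
      Tendsto (fun n => P {ω | ε ≤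
          (1 / (M n : ℝ)) * (∑ k ∈ Finset.Icc 1 (M n),
            if (∑ j, w j * φ ((1 / ((M n : ℝ) + 1)) * (1 / 2 + ∑ l ∈ Finset.Icc 1 (M n),
                  if Trep n 0 ω j ≤ Trep n l ω j then (1 : ℝ) else 0)))
                ≤ (∑ j, w j * φ ((1 / ((M n : ℝ) + 1)) * (1 / 2 + ∑ l ∈ Finset.Icc 1 (M n),
                  if Trep n k ω j ≤ Trep n l ω j then (1 : ℝ) else 0)))
              then (1 : ℝ) else 0)})
        atTop (𝓝 0) := by
  intro ε hε
  classical
  have hrpos : (0 : ℝ) < r := by exact_mod_cast hr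
  have hφpos : ∀ x ∈ Set.Ioo (0 : ℝ) 1, 0 < φ x := fun x hx => hφbij.mapsTo hx
  -- constants
  set c : ℝ := w j0 / ∑ j, w j with hcdef
  have hwsum : 0 < ∑ j, w j :=
    Finset.sum_pos (fun j _ => hw j) ⟨j0, Finset.mem_univ _⟩
  have hc : 0 < c := div_pos (hw j0) hwsum
  set ε' : ℝ := min (ε / (2 * r)) (1 / 2) with hε'def
  have hε'mem : ε' ∈ Set.Ioo (0 : ℝ) 1 := by
    constructor
    · exact lt_min (by positivity) (by norm_num)
    · exact lt_of_le_of_lt (min_le_right _ _) (by norm_num)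
  have hφε' : 0 < φ ε' := hφpos _ hε'mem
  obtain ⟨δ, hδmem, hφδ'⟩ := hφbij.surjOn (show φ ε' / c ∈ Set.Ioi (0:ℝ) by
    exact Set.mem_Ioi.mpr (div_pos hφε' hc))
  have hφδ : φ δ * c = φ ε' := by
    rw [hφδ']; field_simp
  -- measurability of coordinates of Trep
  have hTmeas : ∀ n i, Measurable (fun ω => Trep n i ω j0) := by
    intro n i
    have h : (fun ω => Trep n i ω j0)
        = fun ω => (if i = 0 then f n (X n ω) else g n (X n ω, V n i ω)) j0 :=
      funext fun ω => by rw [hTrep]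
    rw [h]
    rcases eq_or_ne i 0 with h0 | h0
    · simp only [h0, if_pos rfl]
      exact (measurable_pi_apply j0).comp ((hf n).comp (hXmeas n))
    · simp only [if_neg h0]
      exact (measurable_pi_apply j0).comp
        ((hg n).comp ((hXmeas n).prodMk (hVmeas n i)))
  set A : ℕ → ℕ → Set Ω := fun n l => {ω | Trep n 0 ω j0 ≤ Trep n l ω j0} with hA
  have hAmeas : ∀ n l, MeasurableSet (A n l) := fun n l =>
    measurableSet_le (hTmeas n 0) (hTmeas n l)
  -- equality of the laws of the replicates
  have hlawA : ∀ n l, 1 ≤ l → P (A n l) = P (A n 1) := by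
    intro n l hl
    have hpair : ∀ m, Measurable (fun ω => (X n ω, V n m ω)) := fun m =>
      (hXmeas n).prodMk (hVmeas n m)
    set B : Set (𝒳 n × 𝒱 n) := {q | f n q.1 j0 ≤ g n q j0} with hB
    have hBm : MeasurableSet B :=
      measurableSet_le ((measurable_pi_apply j0).comp ((hf n).comp measurable_fst))
        ((measurable_pi_apply j0).comp (hg n))
    have hAeq : ∀ m, 1 ≤ m → A n m = (fun ω => (X n ω, V n m ω)) ⁻¹' B := by
      intro m hm
      ext ω
      simp only [hA, Set.mem_setOf_eq, Set.mem_preimage, hB]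
      rw [hTrep n 0 ω, hTrep n m ω, if_pos rfl, if_neg (Nat.one_le_iff_ne_zero.mp hm)]
    have hmap : ∀ m, 1 ≤ m →
        P.map (fun ω => (X n ω, V n m ω)) = (P.map (X n)).prod (ν n) := by
      intro m hm
      have h1 : IndepFun (X n) (V n m) P := by
        have h2 := (hVindepX n).comp measurable_id
          (measurable_pi_apply (X := fun _ : ℕ => 𝒱 n) (m - 1))
        have h3 : ((fun v : ℕ → 𝒱 n => v (m - 1)) ∘ (fun ω (i : ℕ) => V n (i + 1) ω))
            = V n m := by
          funext ω
          have hm' : m - 1 + 1 = m := by omega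
          simp [Function.comp, hm']
        rwa [Function.id_comp, h3] at h2
      rw [(indepFun_iff_map_prod_eq_prod_map_map (hXmeas n).aemeasurable
        (hVmeas n m).aemeasurable).mp h1, hVlaw n m hm]
    rw [hAeq l hl, hAeq 1 le_rfl, ← Measure.map_apply (hpair l) hBm,
      ← Measure.map_apply (hpair 1) hBm, hmap l hl, hmap 1 le_rfl]
  -- convergence of P(A n 1) in ℝ≥0∞
  have hA1tendsto : Tendsto (fun n => P (A n 1)) atTop (𝓝 0) := by
    have heq : (fun n => P (A n 1)) = fun n => ENNReal.ofReal ((P (A n 1)).toReal) :=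
      funext fun n => (ENNReal.ofReal_toReal (measure_ne_top P _)).symm
    rw [heq]
    have := ENNReal.tendsto_ofReal (a := 0) hj0
    simpa using this
  -- eventual bound
  have hev : ∀ᶠ n in atTop, P {ω | ε ≤
      (1 / (M n : ℝ)) * (∑ k ∈ Finset.Icc 1 (M n),
        if (∑ j, w j * φ ((1 / ((M n : ℝ) + 1)) * (1 / 2 + ∑ l ∈ Finset.Icc 1 (M n),
              if Trep n 0 ω j ≤ Trep n l ω j then (1 : ℝ) else 0)))
            ≤ (∑ j, w j * φ ((1 / ((M n : ℝ) + 1)) * (1 / 2 + ∑ l ∈ Finset.Icc 1 (M n),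
              if Trep n k ω j ≤ Trep n l ω j then (1 : ℝ) else 0)))
          then (1 : ℝ) else 0)}
      ≤ ENNReal.ofReal (2 / δ) * P (A n 1) := by
    filter_upwards [hMtop.eventually_ge_atTop (max 2 (⌈1 / δ⌉₊ + 1))] with n hn
    have hM2 : (2 : ℝ) ≤ (M n : ℝ) := by
      exact_mod_cast le_trans (le_max_left _ _) hn
    have hMceil : (⌈1 / δ⌉₊ : ℝ) + 1 ≤ (M n : ℝ) := by
      exact_mod_cast le_trans (le_max_right _ _) hn
    have hδM : 1 ≤ δ * (M n : ℝ) := by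
      have h1 : 1 / δ ≤ ⌈1 / δ⌉₊ := Nat.le_ceil _
      have h2 : 1 / δ ≤ (M n : ℝ) := by linarith
      rw [div_le_iff₀ hδmem.1] at h2
      linarith [mul_comm δ (M n : ℝ)]
    have hMpos : (0 : ℝ) < (M n : ℝ) := by linarith
    set t0 : ℝ := δ * ((M n : ℝ) + 1) - 1 / 2 with ht0def
    have ht0 : 0 ≤ t0 := by
      have : δ * (M n : ℝ) ≤ δ * ((M n : ℝ) + 1) :=
        mul_le_mul_of_nonneg_left (by linarith) hδmem.1.le
      simp only [ht0def]; linarith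
    set m0 : ℕ := ⌊t0⌋₊ + 1 with hm0def
    have hm0t0 : t0 < (m0 : ℝ) := by
      simp only [hm0def]; push_cast; exact Nat.lt_floor_add_one t0
    have hm0ge : t0 ≤ (m0 : ℝ) := hm0t0.le
    -- the counting function
    set S : Ω → ℝ≥0∞ := fun ω => ∑ l ∈ Finset.Icc 1 (M n),
      Set.indicator (A n l) (1 : Ω → ℝ≥0∞) ω with hS
    have hSmeas : Measurable S := by
      apply Finset.measurable_sum
      intro l _
      exact (measurable_one.indicator (hAmeas n l))
    have hSint : ∫⁻ ω, S ω ∂P = (M n : ℝ≥0∞) * P (A n 1) := by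
      rw [hS]
      rw [lintegral_finset_sum _ (fun l _ => measurable_one.indicator (hAmeas n l))]
      have : ∀ l ∈ Finset.Icc 1 (M n),
          (∫⁻ ω, Set.indicator (A n l) (1 : Ω → ℝ≥0∞) ω ∂P) = P (A n 1) := by
        intro l hl
        rw [Finset.mem_Icc] at hl
        rw [lintegral_indicator_one (hAmeas n l)]
        exact hlawA n l hl.1
      rw [Finset.sum_congr rfl this, Finset.sum_const, Nat.card_Icc]
      simp [nsmul_eq_mul]
    -- inclusion of the event
    have hincl : {ω | ε ≤
        (1 / (M n : ℝ)) * (∑ k ∈ Finset.Icc 1 (M n),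
          if (∑ j, w j * φ ((1 / ((M n : ℝ) + 1)) * (1 / 2 + ∑ l ∈ Finset.Icc 1 (M n),
                if Trep n 0 ω j ≤ Trep n l ω j then (1 : ℝ) else 0)))
              ≤ (∑ j, w j * φ ((1 / ((M n : ℝ) + 1)) * (1 / 2 + ∑ l ∈ Finset.Icc 1 (M n),
                if Trep n k ω j ≤ Trep n l ω j then (1 : ℝ) else 0)))
            then (1 : ℝ) else 0)} ⊆
        {ω | ¬ (∀ j : Fin r, ∀ k ∈ Finset.Icc 1 (M n), ∀ l ∈ Finset.Icc 1 (M n),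
            k ≠ l → Trep n k ω j ≠ Trep n l ω j)}
          ∪ {ω | (m0 : ℝ≥0∞) ≤ S ω} := by
      intro ω hω
      simp only [Set.mem_setOf_eq] at hω
      by_cases hQ : ∀ j : Fin r, ∀ k ∈ Finset.Icc 1 (M n), ∀ l ∈ Finset.Icc 1 (M n),
          k ≠ l → Trep n k ω j ≠ Trep n l ω j
      · right
        simp only [Set.mem_setOf_eq]
        by_contra hSsmall
        push_neg at hSsmall
        -- S ω = N0 as a natural number
        set N0 : ℕ := ((Finset.Icc 1 (M n)).filter
          (fun l => Trep n 0 ω j0 ≤ Trep n l ω j0)).card with hN0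
        have hSval : S ω = (N0 : ℝ≥0∞) := by
          rw [hS]
          simp only [Set.indicator_apply, hA, Set.mem_setOf_eq, Pi.one_apply]
          rw [Finset.sum_boole]
        have hN0lt : (N0 : ℝ≥0∞) < (m0 : ℝ≥0∞) := by rw [← hSval]; exact hSsmall
        have hN0lt' : N0 < m0 := by exact_mod_cast hN0lt
        have hN0le : (N0 : ℝ) ≤ t0 := by
          have : N0 ≤ ⌊t0⌋₊ := Nat.lt_succ_iff.mp hN0lt'
          exact (Nat.le_floor_iff ht0).mp this
        -- hence p-value at 0, j0 is at most δ
        have hp0 : (1 / ((M n : ℝ) + 1)) * (1 / 2 + ∑ l ∈ Finset.Icc 1 (M n),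
            if Trep n 0 ω j0 ≤ Trep n l ω j0 then (1 : ℝ) else 0) ≤ δ := by
          have hsum : (∑ l ∈ Finset.Icc 1 (M n),
              if Trep n 0 ω j0 ≤ Trep n l ω j0 then (1 : ℝ) else 0) = (N0 : ℝ) := by
            rw [Finset.sum_boole]
          rw [hsum, div_mul_eq_mul_div, one_mul, div_le_iff₀ (by linarith : (0:ℝ) < (M n:ℝ)+1)]
          simp only [ht0def] at hN0le
          linarith
        have hkey := stmt4_key w hw φ hφanti hφpos j0 (M n) (hM n)
          (fun i j => Trep n i ω j) hQ ε' δ hε'mem hδmem hφδ hp0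
        rw [one_div_mul_eq_div, le_div_iff₀ hMpos] at hω
        have hrε' : (r : ℝ) * ε' ≤ ε / 2 := by
          have h5 : (r : ℝ) * ε' ≤ (r : ℝ) * (ε / (2 * r)) :=
            mul_le_mul_of_nonneg_left (min_le_left _ _) hrpos.le
          have h6 : (r : ℝ) * (ε / (2 * r)) = ε / 2 := by field_simp
          linarith
        have h7 : (r : ℝ) * (ε' * ((M n : ℝ) + 1)) ≤ (ε / 2) * ((M n : ℝ) + 1) := by
          rw [← mul_assoc]
          exact mul_le_mul_of_nonneg_right hrε' (by linarith)
        have h8 : ε * (M n : ℝ) ≤ (ε / 2) * ((M n : ℝ) + 1) :=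
          le_trans hω (le_trans hkey h7)
        nlinarith [h8, hM2, hε]
      · left
        exact hQ
    -- probability bound
    have htiesnull : P {ω | ¬ (∀ j : Fin r, ∀ k ∈ Finset.Icc 1 (M n),
        ∀ l ∈ Finset.Icc 1 (M n), k ≠ l → Trep n k ω j ≠ Trep n l ω j)} = 0 :=
      ae_iff.mp (hties n)
    have hmarkov : (m0 : ℝ≥0∞) * P {ω | (m0 : ℝ≥0∞) ≤ S ω} ≤ (M n : ℝ≥0∞) * P (A n 1) := by
      rw [← hSint]
      exact mul_meas_ge_le_lintegral₀ hSmeas.aemeasurable _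
    have hm0pos : (0 : ℝ) < m0 := by positivity
    have hMm0 : (M n : ℝ≥0∞) ≤ (m0 : ℝ≥0∞) * ENNReal.ofReal (2 / δ) := by
      have hreal : (M n : ℝ) ≤ (m0 : ℝ) * (2 / δ) := by
        have h1 : δ * (M n : ℝ) / 2 ≤ (m0 : ℝ) := by
          have : δ * (M n : ℝ) ≤ δ * ((M n : ℝ) + 1) :=
            mul_le_mul_of_nonneg_left (by linarith) hδmem.1.le
          simp only [ht0def] at hm0ge
          linarith
        have hδpos := hδmem.1
        have h2 : (δ * (M n : ℝ) / 2) * (2 / δ) ≤ (m0 : ℝ) * (2 / δ) :=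
          mul_le_mul_of_nonneg_right h1 (by positivity)
        have h3 : (δ * (M n : ℝ) / 2) * (2 / δ) = (M n : ℝ) := by field_simp
        linarith
      calc (M n : ℝ≥0∞) = ENNReal.ofReal (M n : ℝ) := by
            rw [ENNReal.ofReal_natCast]
        _ ≤ ENNReal.ofReal ((m0 : ℝ) * (2 / δ)) := ENNReal.ofReal_le_ofReal hreal
        _ = ENNReal.ofReal (m0 : ℝ) * ENNReal.ofReal (2 / δ) :=
            ENNReal.ofReal_mul (Nat.cast_nonneg _)
        _ = (m0 : ℝ≥0∞) * ENNReal.ofReal (2 / δ) := by rw [ENNReal.ofReal_natCast]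
    have hPS : P {ω | (m0 : ℝ≥0∞) ≤ S ω} ≤ ENNReal.ofReal (2 / δ) * P (A n 1) := by
      have hm0ne : (m0 : ℝ≥0∞) ≠ 0 := by
        simp [hm0def]
      have hm0top : (m0 : ℝ≥0∞) ≠ ⊤ := ENNReal.natCast_ne_top _
      rw [← ENNReal.mul_le_mul_iff_right hm0ne hm0top]
      calc (m0:ℝ≥0∞) * P {ω | (m0 : ℝ≥0∞) ≤ S ω} ≤ (M n : ℝ≥0∞) * P (A n 1) := hmarkov
        _ ≤ ((m0:ℝ≥0∞) * ENNReal.ofReal (2/δ)) * P (A n 1) :=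
            mul_le_mul_left hMm0 _
        _ = (m0:ℝ≥0∞) * (ENNReal.ofReal (2/δ) * P (A n 1)) := by ring
    calc P _ ≤ P ({ω | ¬ (∀ j : Fin r, ∀ k ∈ Finset.Icc 1 (M n),
          ∀ l ∈ Finset.Icc 1 (M n), k ≠ l → Trep n k ω j ≠ Trep n l ω j)}
          ∪ {ω | (m0 : ℝ≥0∞) ≤ S ω}) := measure_mono hincl
      _ ≤ P {ω | ¬ (∀ j : Fin r, ∀ k ∈ Finset.Icc 1 (M n),
          ∀ l ∈ Finset.Icc 1 (M n), k ≠ l → Trep n k ω j ≠ Trep n l ω j)}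
          + P {ω | (m0 : ℝ≥0∞) ≤ S ω} := measure_union_le _ _
      _ = P {ω | (m0 : ℝ≥0∞) ≤ S ω} := by rw [htiesnull, zero_add]
      _ ≤ ENNReal.ofReal (2 / δ) * P (A n 1) := hPS
  -- conclude by squeezing
  have hupper : Tendsto (fun n => ENNReal.ofReal (2 / δ) * P (A n 1)) atTop (𝓝 0) := by
    have := ENNReal.Tendsto.const_mul (a := ENNReal.ofReal (2 / δ)) hA1tendsto
      (Or.inr ENNReal.ofReal_ne_top)
    simpa using this
  exact tendsto_of_tendsto_of_tendsto_of_le_of_le' tendsto_const_nhds hupper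
    (Eventually.of_forall (fun n => zero_le)) hev
end

section
/- Under the combining setup with ψ of Stouffer type, assume that (ii) W_{n,M_n}^{[0]} diverges to +∞ in probability (that is, for every real C, P(W_{n,M_n}^{[0]} ≤ C) → 0 as n → ∞), and (iii) for every n, almost surely, for each j ∈ {1,…,r} the bootstrap replicates T_{n,j}^{[1]}, …, T_{n,j}^{[M_n]} are pairwise distinct. Then the global approximate p-value p_{n,M_n}(W_{n,M_n}^{[0]}) = (1/M_n) Σ_{k=1}^{M_n} 1(W_{n,M_n}^{[k]} ≥ W_{n,M_n}^{[0]}) converges to 0 in probability as n → ∞. -/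
open MeasureTheory ProbabilityTheory Filter Topology


lemma stmt6_aux {r : ℕ} (w : Fin r → ℝ) (hw : ∀ j, 0 < w j)
    (φ : ℝ → ℝ) (hφanti : StrictAntiOn φ (Set.Ioo (0:ℝ) 1))
    (M : ℕ) (hM : 1 ≤ M) (T : ℕ → Fin r → ℝ)
    (hties : ∀ j : Fin r, ∀ k ∈ Finset.Icc 1 M, ∀ l ∈ Finset.Icc 1 M, k ≠ l → T k j ≠ T l j)
    (W : ℕ → ℝ)
    (hW : ∀ k, W k = ∑ j, w j * φ ((1/((M:ℝ)+1)) * (1/2 +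
        ∑ l ∈ Finset.Icc 1 M, if T k j ≤ T l j then (1:ℝ) else 0)))
    (ε δ : ℝ) (hδpos : 0 < δ) (hδlt : δ/2 < 1)
    (hδε : (r:ℝ) * δ < ε)
    (hcount : ε ≤ (1/(M:ℝ)) * ∑ k ∈ Finset.Icc 1 M, if W 0 ≤ W k then (1:ℝ) else 0) :
    W 0 ≤ (∑ j, w j) * φ (δ/2) := by
  by_contra hC
  push_neg at hC
  have hMR : (1:ℝ) ≤ (M:ℝ) := by exact_mod_cast hM
  have hM1 : (0:ℝ) < (M:ℝ) + 1 := by linarith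
  set cnt : Fin r → ℕ → ℕ :=
    fun j k => ((Finset.Icc 1 M).filter (fun l => T k j ≤ T l j)).card with hcntdef
  have hsum : ∀ j k, (∑ l ∈ Finset.Icc 1 M, if T k j ≤ T l j then (1:ℝ) else 0)
      = (cnt j k : ℝ) := by
    intro j k; rw [Finset.sum_boole]
  have hcnt_le : ∀ j k, cnt j k ≤ M := by
    intro j k
    calc cnt j k ≤ (Finset.Icc 1 M).card := Finset.card_filter_le _ _
    _ = M := by simp
  have hcnt_pos : ∀ (j : Fin r), ∀ k ∈ Finset.Icc 1 M, 1 ≤ cnt j k := by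
    intro j k hk
    have : k ∈ (Finset.Icc 1 M).filter (fun l => T k j ≤ T l j) :=
      Finset.mem_filter.mpr ⟨hk, le_refl _⟩
    exact Finset.card_pos.mpr ⟨k, this⟩
  have hmono : ∀ (j : Fin r), ∀ k ∈ Finset.Icc 1 M, ∀ k' ∈ Finset.Icc 1 M,
      T k j < T k' j → cnt j k' < cnt j k := by
    intro j k hk k' hk' hlt
    apply Finset.card_lt_card
    refine (Finset.ssubset_iff_of_subset ?_).mpr ?_
    · intro l hl
      rw [Finset.mem_filter] at hl ⊢
      exact ⟨hl.1, hlt.le.trans hl.2⟩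
    · refine ⟨k, Finset.mem_filter.mpr ⟨hk, le_refl _⟩, ?_⟩
      rw [Finset.mem_filter]
      push_neg
      intro _
      exact hlt
  have hinj : ∀ (j : Fin r), ∀ k ∈ Finset.Icc 1 M, ∀ k' ∈ Finset.Icc 1 M,
      k ≠ k' → cnt j k ≠ cnt j k' := by
    intro j k hk k' hk' hne
    rcases lt_trichotomy (T k j) (T k' j) with h | h | h
    · exact (hmono j k hk k' hk' h).ne'
    · exact absurd h (hties j k hk k' hk' hne)
    · exact (hmono j k' hk' k hk h).ne
  have hδIoo : δ/2 ∈ Set.Ioo (0:ℝ) 1 := ⟨by positivity, hδlt⟩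
  have hkey : ∀ k ∈ Finset.Icc 1 M, W 0 ≤ W k → ∃ j, (cnt j k : ℝ) < δ * M := by
    intro k hk hWk
    by_contra hno
    push_neg at hno
    have hWle : W k ≤ (∑ j, w j) * φ (δ/2) := by
      rw [hW k, Finset.sum_mul]
      apply Finset.sum_le_sum
      intro j _
      have hceq := hsum j k
      rw [hceq]
      have hcM : (cnt j k : ℝ) ≤ M := by exact_mod_cast hcnt_le j k
      have hcpos : (0:ℝ) ≤ (cnt j k : ℝ) := Nat.cast_nonneg _
      have hpform : (1/((M:ℝ)+1)) * (1/2 + (cnt j k : ℝ))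
          = (1/2 + (cnt j k : ℝ)) / ((M:ℝ)+1) := by ring
      rw [hpform]
      set p : ℝ := (1/2 + (cnt j k : ℝ)) / ((M:ℝ)+1) with hpdef
      have hplt1 : p < 1 := by
        rw [hpdef, div_lt_one hM1]; linarith
      have hppos : 0 < p := by
        rw [hpdef]; positivity
      have hpge : δ/2 ≤ p := by
        rw [hpdef, le_div_iff₀ hM1]
        nlinarith [hno j, hδpos, hMR]
      have hφle : φ p ≤ φ (δ/2) := by
        rcases eq_or_lt_of_le hpge with h | h
        · rw [← h]
        · exact (hφanti hδIoo ⟨hppos, hplt1⟩ h).le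
      exact mul_le_mul_of_nonneg_left hφle (hw j).le
    linarith
  set S := (Finset.Icc 1 M).filter (fun k => W 0 ≤ W k) with hSdef
  have hScount : ε ≤ (1/(M:ℝ)) * (S.card : ℝ) := by
    rwa [Finset.sum_boole] at hcount
  have hBcard : ∀ j : Fin r,
      ((Finset.Icc 1 M).filter (fun k => (cnt j k : ℝ) < δ * M)).card
        ≤ Nat.floor (δ * (M:ℝ)) := by
    intro j
    have : ((Finset.Icc 1 M).filter (fun k => (cnt j k : ℝ) < δ * M)).card
        ≤ (Finset.Icc 1 (Nat.floor (δ * (M:ℝ)))).card := by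
      apply Finset.card_le_card_of_injOn (cnt j)
      · intro k hk
        rw [Finset.coe_filter, Set.mem_setOf_eq] at hk
        exact Finset.mem_coe.mpr (Finset.mem_Icc.mpr ⟨hcnt_pos j k hk.1, Nat.le_floor hk.2.le⟩)
      · intro k hk k' hk' heq
        by_contra hne
        rw [Finset.coe_filter, Set.mem_setOf_eq] at hk hk'
        exact hinj j k hk.1 k' hk'.1 hne heq
    simpa using this
  have hSsub : S ⊆ Finset.univ.biUnion
      (fun j : Fin r => (Finset.Icc 1 M).filter (fun k => (cnt j k : ℝ) < δ * M)) := by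
    intro k hk
    rw [hSdef, Finset.mem_filter] at hk
    obtain ⟨j, hj⟩ := hkey k hk.1 hk.2
    exact Finset.mem_biUnion.mpr ⟨j, Finset.mem_univ j,
      Finset.mem_filter.mpr ⟨hk.1, hj⟩⟩
  have hfloor : (Nat.floor (δ * (M:ℝ)) : ℝ) ≤ δ * M :=
    Nat.floor_le (by positivity)
  have hScard : (S.card : ℝ) ≤ (r:ℝ) * (δ * M) := by
    have h1 : S.card ≤ ∑ j : Fin r, ((Finset.Icc 1 M).filter
        (fun k => (cnt j k : ℝ) < δ * M)).card :=
      (Finset.card_le_card hSsub).trans (Finset.card_biUnion_le)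
    have h2 : (S.card : ℝ) ≤ ∑ j : Fin r, (Nat.floor (δ * (M:ℝ)) : ℝ) := by
      calc (S.card : ℝ) ≤ (∑ j : Fin r, ((Finset.Icc 1 M).filter
            (fun k => (cnt j k : ℝ) < δ * M)).card : ℕ) := by exact_mod_cast h1
        _ = ∑ j : Fin r, (((Finset.Icc 1 M).filter
            (fun k => (cnt j k : ℝ) < δ * M)).card : ℝ) := by push_cast; ring
        _ ≤ ∑ j : Fin r, (Nat.floor (δ * (M:ℝ)) : ℝ) := by
            apply Finset.sum_le_sum
            intro j _
            exact_mod_cast hBcard j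
    calc (S.card : ℝ) ≤ ∑ j : Fin r, (Nat.floor (δ * (M:ℝ)) : ℝ) := h2
      _ = (r:ℝ) * (Nat.floor (δ * (M:ℝ)) : ℝ) := by
          rw [Finset.sum_const]; simp [mul_comm]
      _ ≤ (r:ℝ) * (δ * M) := by
          apply mul_le_mul_of_nonneg_left hfloor (Nat.cast_nonneg _)
  have hMpos : (0:ℝ) < (M:ℝ) := by linarith
  have hfin : (1/(M:ℝ)) * (S.card : ℝ) ≤ (r:ℝ) * δ := by
    rw [div_mul_eq_mul_div, one_mul, div_le_iff₀ hMpos]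
    nlinarith [hScard]
  linarith

/-- In the combining setup with a Stouffer-type combining function
`ψ(p_1,…,p_r) = Σ_j w_j φ(p_j)` (`w_j > 0`, `φ : (0,1) → ℝ` decreasing, non-negative on
`(0,1/2)` and a bijection onto `ℝ`), if (ii) `W_{n,M_n}^{[0]}` diverges to `+∞` in
probability and (iii) for every `n`, almost surely and for each `j`, the bootstrap
replicates `T_{n,j}^{[1]}, …, T_{n,j}^{[M_n]}` are pairwise distinct, then the global
approximate p-value
`p_{n,M_n}(W_{n,M_n}^{[0]}) = (1/M_n) Σ_{k=1}^{M_n} 1(W_{n,M_n}^{[k]} ≥ W_{n,M_n}^{[0]})`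
converges to `0` in probability. -/
theorem stmt6
    {Ω : Type*} [MeasurableSpace Ω] (P : Measure Ω) [IsProbabilityMeasure P]
    (r : ℕ) (hr : 1 ≤ r)
    (𝒳 𝒱 : ℕ → Type*) [∀ n, MeasurableSpace (𝒳 n)] [∀ n, MeasurableSpace (𝒱 n)]
    (X : ∀ n, Ω → 𝒳 n) (hXmeas : ∀ n, Measurable (X n))
    (ν : ∀ n, Measure (𝒱 n)) [∀ n, IsProbabilityMeasure (ν n)]
    (V : ∀ n, ℕ → Ω → 𝒱 n) (hVmeas : ∀ n i, Measurable (V n i))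
    (hVlaw : ∀ n i, 1 ≤ i → Measure.map (V n i) P = ν n)
    (hViid : ∀ n, iIndepFun
        (fun i => V n (i + 1)) P)
    (hVindepX : ∀ n, IndepFun (X n) (fun ω (i : ℕ) => V n (i + 1) ω) P)
    (f : ∀ n, 𝒳 n → (Fin r → ℝ)) (hf : ∀ n, Measurable (f n))
    (g : ∀ n, 𝒳 n × 𝒱 n → (Fin r → ℝ)) (hg : ∀ n, Measurable (g n))
    (Trep : ℕ → ℕ → Ω → (Fin r → ℝ))
    (hTrep : ∀ n i ω, Trep n i ω = if i = 0 then f n (X n ω) else g n (X n ω, V n i ω))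
    (M : ℕ → ℕ) (hM : ∀ n, 1 ≤ M n) (hMtop : Tendsto M atTop atTop)
    -- ψ of Stouffer type
    (w : Fin r → ℝ) (hw : ∀ j, 0 < w j)
    (φ : ℝ → ℝ)
    (hφanti : StrictAntiOn φ (Set.Ioo (0 : ℝ) 1))
    (hφnonneg : ∀ x ∈ Set.Ioo (0 : ℝ) (1 / 2), 0 ≤ φ x)
    (hφbij : Set.BijOn φ (Set.Ioo (0 : ℝ) 1) Set.univ)
    -- (ii) W_{n,M_n}^{[0]} diverges to +∞ in probability
    (hWdiv : ∀ C : ℝ,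
        Tendsto (fun n => P {ω |
            (∑ j, w j * φ ((1 / ((M n : ℝ) + 1)) * (1 / 2 + ∑ l ∈ Finset.Icc 1 (M n),
                if Trep n 0 ω j ≤ Trep n l ω j then (1 : ℝ) else 0))) ≤ C})
          atTop (𝓝 0))
    -- (iii) no ties among the bootstrap replicates
    (hties : ∀ n, ∀ᵐ ω ∂P, ∀ j : Fin r, ∀ k ∈ Finset.Icc 1 (M n), ∀ l ∈ Finset.Icc 1 (M n),
        k ≠ l → Trep n k ω j ≠ Trep n l ω j) :
    ∀ ε : ℝ, 0 < ε →
      Tendsto (fun n => P {ω | ε ≤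
          (1 / (M n : ℝ)) * (∑ k ∈ Finset.Icc 1 (M n),
            if (∑ j, w j * φ ((1 / ((M n : ℝ) + 1)) * (1 / 2 + ∑ l ∈ Finset.Icc 1 (M n),
                  if Trep n 0 ω j ≤ Trep n l ω j then (1 : ℝ) else 0)))
                ≤ (∑ j, w j * φ ((1 / ((M n : ℝ) + 1)) * (1 / 2 + ∑ l ∈ Finset.Icc 1 (M n),
                  if Trep n k ω j ≤ Trep n l ω j then (1 : ℝ) else 0)))
              then (1 : ℝ) else 0)})
        atTop (𝓝 0) := by
  intro ε hε
  have hrR : (1:ℝ) ≤ (r:ℝ) := by exact_mod_cast hr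
  have hrpos : (0:ℝ) < (r:ℝ) := by linarith
  set δ : ℝ := min ε 1 / (2 * r) with hδdef
  have hδpos : 0 < δ := div_pos (lt_min hε one_pos) (by positivity)
  have hδlt : δ / 2 < 1 := by
    have h1 : min ε 1 ≤ 1 := min_le_right _ _
    have h2 : δ ≤ 1/2 := by
      rw [hδdef, div_le_div_iff₀ (by positivity) two_pos]
      nlinarith
    linarith
  have hδε : (r:ℝ) * δ < ε := by
    have heq : (r:ℝ) * δ = min ε 1 / 2 := by
      rw [hδdef]; field_simp
    have := min_le_left ε 1
    rw [heq]; linarith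
  set C : ℝ := (∑ j, w j) * φ (δ/2) with hCdef
  have hP : ∀ n, P {ω | ε ≤
      (1 / (M n : ℝ)) * (∑ k ∈ Finset.Icc 1 (M n),
        if (∑ j, w j * φ ((1 / ((M n : ℝ) + 1)) * (1 / 2 + ∑ l ∈ Finset.Icc 1 (M n),
              if Trep n 0 ω j ≤ Trep n l ω j then (1 : ℝ) else 0)))
            ≤ (∑ j, w j * φ ((1 / ((M n : ℝ) + 1)) * (1 / 2 + ∑ l ∈ Finset.Icc 1 (M n),
              if Trep n k ω j ≤ Trep n l ω j then (1 : ℝ) else 0)))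
          then (1 : ℝ) else 0)}
      ≤ P {ω |
        (∑ j, w j * φ ((1 / ((M n : ℝ) + 1)) * (1 / 2 + ∑ l ∈ Finset.Icc 1 (M n),
            if Trep n 0 ω j ≤ Trep n l ω j then (1 : ℝ) else 0))) ≤ C} := by
    intro n
    have hnull : P {ω | ¬ ∀ j : Fin r, ∀ k ∈ Finset.Icc 1 (M n), ∀ l ∈ Finset.Icc 1 (M n),
        k ≠ l → Trep n k ω j ≠ Trep n l ω j} = 0 := by
      have := hties n
      rwa [ae_iff] at this
    have hsub : {ω | ε ≤
        (1 / (M n : ℝ)) * (∑ k ∈ Finset.Icc 1 (M n),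
          if (∑ j, w j * φ ((1 / ((M n : ℝ) + 1)) * (1 / 2 + ∑ l ∈ Finset.Icc 1 (M n),
                if Trep n 0 ω j ≤ Trep n l ω j then (1 : ℝ) else 0)))
              ≤ (∑ j, w j * φ ((1 / ((M n : ℝ) + 1)) * (1 / 2 + ∑ l ∈ Finset.Icc 1 (M n),
                if Trep n k ω j ≤ Trep n l ω j then (1 : ℝ) else 0)))
            then (1 : ℝ) else 0)}
        ⊆ {ω |
          (∑ j, w j * φ ((1 / ((M n : ℝ) + 1)) * (1 / 2 + ∑ l ∈ Finset.Icc 1 (M n),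
              if Trep n 0 ω j ≤ Trep n l ω j then (1 : ℝ) else 0))) ≤ C}
          ∪ {ω | ¬ ∀ j : Fin r, ∀ k ∈ Finset.Icc 1 (M n), ∀ l ∈ Finset.Icc 1 (M n),
              k ≠ l → Trep n k ω j ≠ Trep n l ω j} := by
      intro ω hω
      by_cases ht : ∀ j : Fin r, ∀ k ∈ Finset.Icc 1 (M n), ∀ l ∈ Finset.Icc 1 (M n),
          k ≠ l → Trep n k ω j ≠ Trep n l ω j
      · left
        exact stmt6_aux w hw φ hφanti (M n) (hM n) (fun k => Trep n k ω) ht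
          (fun k => ∑ j, w j * φ ((1 / ((M n : ℝ) + 1)) * (1 / 2 + ∑ l ∈ Finset.Icc 1 (M n),
            if Trep n k ω j ≤ Trep n l ω j then (1 : ℝ) else 0)))
          (fun k => rfl) ε δ hδpos hδlt hδε hω
      · right; exact ht
    calc P _ ≤ P (_ ∪ _) := measure_mono hsub
      _ ≤ P _ + P _ := measure_union_le _ _
      _ = P _ := by rw [hnull, add_zero]
  refine tendsto_of_tendsto_of_tendsto_of_le_of_le tendsto_const_nhds (hWdiv C)
    (fun n => zero_le) hP
end

section
/- Under the combining setup with ψ of Stouffer type, assume there exists r0 ∈ {1,…,r−1} such that: (a) the random vector (T_{n,1},…,T_{n,r0}) converges in distribution to an R^{r0}-valued random vector with continuous c.d.f., and sup_{x ∈ R^{r0}} | Q_n(X_n, x) − P(T_{n,1} ≤ x_1, …, T_{n,r0} ≤ x_{r0}) | converges to 0 in probability, where Q_n(y, x) = ν_n({v ∈ 𝒱_n : (g_n(y,v))_j ≤ x_j for all j = 1,…,r0}) is a version of the conditional c.d.f. of (T_{n,1}^{[1]},…,T_{n,r0}^{[1]}) given X_n = y; and (b) for every j ∈ {r0+1,…,r},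 P(T_{n,j}^{[1]} ≥ T_{n,j}) → 0 as n → ∞. Then W_{n,M_n}^{[0]} diverges to +∞ in probability, i.e., for every real C, P(W_{n,M_n}^{[0]} ≤ C) → 0 as n → ∞. -/
open MeasureTheory ProbabilityTheory Filter Topology
open scoped ENNReal
open Classical


lemma stmt7_Bmeas {d : ℕ} (c : Fin d → ℝ) :
    MeasurableSet {y : Fin d → ℝ | ∀ k, y k ≤ c k} := by
  have : {y : Fin d → ℝ | ∀ k, y k ≤ c k} = ⋂ k, {y | y k ≤ c k} := by
    ext y; simp [Set.mem_iInter]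
  rw [this]
  exact MeasurableSet.iInter fun k =>
    measurableSet_le (measurable_pi_apply k) measurable_const

lemma stmt7_atom {d : ℕ} (μ : Measure (Fin d → ℝ)) [IsProbabilityMeasure μ]
    (hcdf : Continuous fun x : Fin d → ℝ => (μ {y | ∀ k, y k ≤ x k}).toReal)
    (j : Fin d) (t : ℝ) : μ {y | y j = t} = 0 := by
  set F : (Fin d → ℝ) → ℝ := fun x => (μ {y | ∀ k, y k ≤ x k}).toReal with hF
  have key : ∀ c : Fin d → ℝ, c j = t →
      μ ({y | y j = t} ∩ {y | ∀ k, y k ≤ c k}) = 0 := by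
    intro c hcj
    have hle : ∀ ε : ℝ, 0 < ε →
        μ ({y | y j = t} ∩ {y | ∀ k, y k ≤ c k}) ≤ ENNReal.ofReal ε := by
      intro ε hε
      obtain ⟨δ, hδ, hδc⟩ := Metric.continuousAt_iff.mp (hcdf.continuousAt (x := c)) ε hε
      set c' : Fin d → ℝ := Function.update c j (t - δ/2) with hc'
      have hdist : dist c' c < δ := by
        have hle2 : dist c' c ≤ δ/2 := by
          apply dist_pi_le_iff (by linarith) |>.mpr
          intro k
          by_cases hk : k = j
          · subst hk
            rw [hc', Function.update_self, Real.dist_eq, hcj]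
            have h9 : t - δ/2 - t = -(δ/2) := by ring
            rw [h9, abs_neg, abs_of_nonneg (by linarith)]
          · rw [hc', Function.update_of_ne hk, dist_self]; linarith
        linarith
      have hFc : |F c' - F c| < ε := by
        have := hδc hdist
        rwa [Real.dist_eq] at this
      have hsub : {y : Fin d → ℝ | y j = t} ∩ {y | ∀ k, y k ≤ c k} ⊆
          {y | ∀ k, y k ≤ c k} \ {y | ∀ k, y k ≤ c' k} := by
        rintro y ⟨hyj, hyc⟩
        refine ⟨hyc, ?_⟩
        intro hyc'
        have := hyc' j
        rw [hc', Function.update_self] at this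
        rw [Set.mem_setOf_eq] at hyj
        linarith
      have hsub2 : {y : Fin d → ℝ | ∀ k, y k ≤ c' k} ⊆ {y | ∀ k, y k ≤ c k} := by
        intro y hy k
        refine le_trans (hy k) ?_
        by_cases hk : k = j
        · subst hk; rw [hc', Function.update_self, hcj]; linarith
        · rw [hc', Function.update_of_ne hk]
      refine le_trans (measure_mono hsub) ?_
      rw [measure_diff hsub2 (stmt7_Bmeas c').nullMeasurableSet (measure_ne_top μ _)]
      rw [ENNReal.le_ofReal_iff_toReal_le (by
          exact ne_top_of_le_ne_top (measure_ne_top μ _) (tsub_le_self)) hε.le]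
      rw [ENNReal.toReal_sub_of_le (measure_mono hsub2) (measure_ne_top μ _)]
      have h1 : F c - F c' ≤ |F c' - F c| := by
        rw [abs_sub_comm]; exact le_abs_self _
      calc (μ {y | ∀ k, y k ≤ c k}).toReal - (μ {y | ∀ k, y k ≤ c' k}).toReal
          = F c - F c' := rfl
        _ ≤ |F c' - F c| := h1
        _ ≤ ε := hFc.le
    -- conclude
    have : μ ({y | y j = t} ∩ {y | ∀ k, y k ≤ c k}) ≤ 0 := by
      have htends : Tendsto (fun m : ℕ => ENNReal.ofReal (1 / (m + 1))) atTop (𝓝 0) := by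
        rw [← ENNReal.ofReal_zero]
        apply ENNReal.tendsto_ofReal
        exact tendsto_one_div_add_atTop_nhds_zero_nat
      exact ge_of_tendsto htends (Eventually.of_forall fun m => hle _ (by positivity))
    exact le_antisymm this zero_le
  -- now cover by countable union
  have hcover : {y : Fin d → ℝ | y j = t} =
      ⋃ m : ℕ, ({y | y j = t} ∩ {y | ∀ k, y k ≤ (fun k => if k = j then t else m) k}) := by
    ext y
    simp only [Set.mem_iUnion, Set.mem_inter_iff, Set.mem_setOf_eq]
    constructor
    · intro hy
      obtain ⟨m, hm⟩ := exists_nat_ge ‖y‖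
      exact ⟨m, hy, fun k => by
        by_cases hk : k = j
        · simp [hk, hy]
        · simp only [if_neg hk]
          exact le_trans (le_trans (le_abs_self _) (norm_le_pi_norm y k)) hm⟩
    · rintro ⟨m, hm, _⟩; exact hm
  rw [hcover]
  exact measure_iUnion_null fun m => key _ (by simp)

section marg
variable {d : ℕ} (μ : Measure (Fin d → ℝ)) [IsProbabilityMeasure μ] (j : Fin d)

lemma stmt7_margmeas (t : ℝ) : MeasurableSet {y : Fin d → ℝ | y j ≤ t} :=
  measurableSet_le (measurable_pi_apply j) measurable_const

lemma stmt7_marg_mono : Monotone fun t : ℝ => (μ {y | y j ≤ t}).toReal := by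
  intro u v huv
  exact ENNReal.toReal_le_toReal (measure_ne_top μ _) (measure_ne_top μ _) |>.mpr
    (measure_mono fun y hy => le_trans hy huv)

lemma stmt7_marg_le_one (t : ℝ) : (μ {y : Fin d → ℝ | y j ≤ t}).toReal ≤ 1 := by
  rw [show (1:ℝ) = (μ Set.univ).toReal by simp]
  exact ENNReal.toReal_le_toReal (measure_ne_top μ _) (measure_ne_top μ _) |>.mpr
    (measure_mono (Set.subset_univ _))

lemma stmt7_marg_diff {u v : ℝ} (huv : u ≤ v) :
    (μ {y | y j ≤ v}).toReal - (μ {y | y j ≤ u}).toReal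
      = (μ {y | u < y j ∧ y j ≤ v}).toReal := by
  have hunion : {y : Fin d → ℝ | y j ≤ v} = {y | y j ≤ u} ∪ {y | u < y j ∧ y j ≤ v} := by
    ext y; simp only [Set.mem_setOf_eq, Set.mem_union]
    constructor
    · intro h; rcases le_or_gt (y j) u with h' | h'
      · exact Or.inl h'
      · exact Or.inr ⟨h', h⟩
    · rintro (h | ⟨_, h⟩); exacts [le_trans h huv, h]
  have hdisj : Disjoint {y : Fin d → ℝ | y j ≤ u} {y | u < y j ∧ y j ≤ v} := by
    rw [Set.disjoint_left]; rintro y hy ⟨h1, _⟩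
    exact absurd hy (not_le.mpr h1)
  have hmeas : MeasurableSet {y : Fin d → ℝ | u < y j ∧ y j ≤ v} := by
    have : {y : Fin d → ℝ | u < y j ∧ y j ≤ v}
        = {y | u < y j} ∩ {y | y j ≤ v} := rfl
    rw [this]
    exact (measurableSet_lt measurable_const (measurable_pi_apply j)).inter
      (stmt7_margmeas j v)
  rw [hunion, measure_union hdisj hmeas, ENNReal.toReal_add (measure_ne_top μ _)
    (measure_ne_top μ _)]
  ring

lemma stmt7_marg_continuous (hatom : ∀ t, μ {y | y j = t} = 0) :
    Continuous fun t : ℝ => (μ {y | y j ≤ t}).toReal := by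
  rw [Metric.continuous_iff]
  intro t ε hε
  set D : ℕ → Set (Fin d → ℝ) :=
    fun m => {y | t - 1/(m+1) < y j ∧ y j ≤ t + 1/(m+1)} with hD
  have hDmeas : ∀ m, MeasurableSet (D m) := fun m =>
    (measurableSet_lt measurable_const (measurable_pi_apply j)).inter
      (stmt7_margmeas j _)
  have hanti : Antitone D := by
    intro m m' hmm y hy
    have h1 : 1/((m':ℝ)+1) ≤ 1/((m:ℝ)+1) := by
      apply one_div_le_one_div_of_le (by positivity)
      exact_mod_cast by omega
    exact ⟨lt_of_le_of_lt (by linarith) hy.1, le_trans hy.2 (by linarith)⟩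
  have hinter : (⋂ m, D m) = {y | y j = t} := by
    ext y
    simp only [Set.mem_iInter, hD, Set.mem_setOf_eq]
    constructor
    · intro h
      have h1 : y j ≤ t := by
        have ht : Tendsto (fun m : ℕ => t + 1/((m:ℝ)+1)) atTop (𝓝 t) := by
          have := tendsto_one_div_add_atTop_nhds_zero_nat (𝕜 := ℝ)
          have := (tendsto_const_nhds (x := t) (f := atTop (α := ℕ))).add this
          simpa using this
        exact ge_of_tendsto ht (Eventually.of_forall fun m => (h m).2)
      have h2 : t ≤ y j := by
        have ht : Tendsto (fun m : ℕ => t - 1/((m:ℝ)+1)) atTop (𝓝 t) := by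
          have := tendsto_one_div_add_atTop_nhds_zero_nat (𝕜 := ℝ)
          have := (tendsto_const_nhds (x := t) (f := atTop (α := ℕ))).sub this
          simpa using this
        exact le_of_tendsto ht (Eventually.of_forall fun m => (h m).1.le)
      linarith
    · intro h m
      constructor
      · rw [h]; have : 0 < 1/((m:ℝ)+1) := by positivity
        linarith
      · rw [h]; have : 0 < 1/((m:ℝ)+1) := by positivity
        linarith
  have htends : Tendsto (μ ∘ D) atTop (𝓝 0) := by
    have := tendsto_measure_iInter_atTop (μ := μ)
      (fun m => (hDmeas m).nullMeasurableSet) hanti ⟨0, measure_ne_top μ _⟩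
    rwa [hinter, hatom t] at this
  have hev : ∀ᶠ m in atTop, (μ ∘ D) m < ENNReal.ofReal ε :=
    htends.eventually_lt_const (by simp [hε])
  obtain ⟨m, hm⟩ := hev.exists
  refine ⟨1/((m:ℝ)+1), by positivity, fun s hst => ?_⟩
  have hDbound : (μ (D m)).toReal < ε := by
    have := ENNReal.toReal_lt_toReal (measure_ne_top μ _) ENNReal.ofReal_ne_top |>.mpr hm
    rwa [ENNReal.toReal_ofReal hε.le] at this
  rw [Real.dist_eq] at hst ⊢
  rcases le_or_gt t s with hts | hts
  · have hsub : {y : Fin d → ℝ | t < y j ∧ y j ≤ s} ⊆ D m := by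
      rintro y ⟨h1, h2⟩
      have : 0 < 1/((m:ℝ)+1) := by positivity
      refine ⟨by linarith, le_trans h2 ?_⟩
      have : s - t < 1/((m:ℝ)+1) := by
        rw [abs_of_nonneg (by linarith)] at hst; linarith
      linarith
    rw [abs_of_nonneg (by linarith [stmt7_marg_mono μ j hts] :
      (0:ℝ) ≤ (μ {y | y j ≤ s}).toReal - (μ {y | y j ≤ t}).toReal)]
    rw [stmt7_marg_diff μ j hts]
    exact lt_of_le_of_lt (ENNReal.toReal_le_toReal (measure_ne_top μ _)
      (measure_ne_top μ _) |>.mpr (measure_mono hsub)) hDbound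
  · have hsub : {y : Fin d → ℝ | s < y j ∧ y j ≤ t} ⊆ D m := by
      rintro y ⟨h1, h2⟩
      have h0 : 0 < 1/((m:ℝ)+1) := by positivity
      have : t - s < 1/((m:ℝ)+1) := by
        rw [abs_of_nonpos (by linarith)] at hst; linarith
      exact ⟨by linarith, by linarith⟩
    rw [abs_of_nonpos (by linarith [stmt7_marg_mono μ j hts.le] :
      (μ {y | y j ≤ s}).toReal - (μ {y | y j ≤ t}).toReal ≤ 0), neg_sub]
    rw [stmt7_marg_diff μ j hts.le]
    exact lt_of_le_of_lt (ENNReal.toReal_le_toReal (measure_ne_top μ _)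
      (measure_ne_top μ _) |>.mpr (measure_mono hsub)) hDbound

lemma stmt7_marg_bot {γ : ℝ} (hγ : 0 < γ) :
    ∃ a : ℝ, (μ {y | y j ≤ a}).toReal ≤ γ := by
  set D : ℕ → Set (Fin d → ℝ) := fun m => {y | y j ≤ -(m:ℝ)} with hD
  have hanti : Antitone D := by
    intro m m' hmm y hy
    simp only [hD, Set.mem_setOf_eq] at hy ⊢
    have : -(m':ℝ) ≤ -(m:ℝ) := by exact_mod_cast neg_le_neg (by exact_mod_cast hmm)
    linarith
  have hinter : (⋂ m, D m) = ∅ := by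
    ext y
    simp only [Set.mem_iInter, hD, Set.mem_setOf_eq, Set.mem_empty_iff_false, iff_false,
      not_forall, not_le]
    obtain ⟨m, hm⟩ := exists_nat_gt (-(y j))
    exact ⟨m, by linarith⟩
  have htends : Tendsto (μ ∘ D) atTop (𝓝 0) := by
    have := tendsto_measure_iInter_atTop (μ := μ)
      (fun m => (stmt7_margmeas j _).nullMeasurableSet) hanti ⟨0, measure_ne_top μ _⟩
    rwa [hinter, measure_empty] at this
  obtain ⟨m, hm⟩ := (htends.eventually_lt_const
    (show (0:ℝ≥0∞) < ENNReal.ofReal γ by simp [hγ])).exists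
  refine ⟨-(m:ℝ), ?_⟩
  have := ENNReal.toReal_le_toReal (measure_ne_top μ _) ENNReal.ofReal_ne_top |>.mpr hm.le
  rwa [ENNReal.toReal_ofReal hγ.le] at this

lemma stmt7_marg_top {γ : ℝ} (hγ : 0 < γ) :
    ∃ b : ℝ, 1 - γ ≤ (μ {y | y j ≤ b}).toReal := by
  rcases le_or_gt 1 γ with h | h
  · exact ⟨0, le_trans (by linarith) ENNReal.toReal_nonneg⟩
  set D : ℕ → Set (Fin d → ℝ) := fun m => {y | y j ≤ (m:ℝ)} with hD
  have hmono : Monotone D := by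
    intro m m' hmm y hy
    simp only [hD, Set.mem_setOf_eq] at hy ⊢
    have : (m:ℝ) ≤ (m':ℝ) := by exact_mod_cast hmm
    linarith
  have hunion : (⋃ m, D m) = Set.univ := by
    ext y
    simp only [Set.mem_iUnion, hD, Set.mem_setOf_eq, Set.mem_univ, iff_true]
    obtain ⟨m, hm⟩ := exists_nat_gt (y j)
    exact ⟨m, hm.le⟩
  have htends : Tendsto (fun m => μ (D m)) atTop (𝓝 1) := by
    have := tendsto_measure_iUnion_atTop (μ := μ) hmono
    rwa [hunion, measure_univ] at this
  obtain ⟨m, hm⟩ := (htends.eventually_const_lt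
    (show ENNReal.ofReal (1-γ) < 1 by
      rw [show (1:ℝ≥0∞) = ENNReal.ofReal 1 by simp]
      exact ENNReal.ofReal_lt_ofReal_iff_of_nonneg (by linarith) |>.mpr (by linarith))).exists
  refine ⟨m, ?_⟩
  have := ENNReal.toReal_le_toReal ENNReal.ofReal_ne_top (measure_ne_top μ _) |>.mpr hm.le
  rwa [ENNReal.toReal_ofReal (by linarith)] at this

end marg

lemma stmt7_margmeas' {d : ℕ} (j : Fin d) (t : ℝ) : MeasurableSet {y : Fin d → ℝ | y j ≤ t} :=
  measurableSet_le (measurable_pi_apply j) measurable_const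

-- weak convergence implies pointwise marginal cdf convergence (limit has atomless marginals)
lemma stmt7_cdf_conv {Ω : Type*} [MeasurableSpace Ω] (P : Measure Ω) [IsProbabilityMeasure P]
    {d : ℕ} (A : ℕ → Ω → (Fin d → ℝ)) (hA : ∀ n, Measurable (A n))
    (μ : Measure (Fin d → ℝ)) [IsProbabilityMeasure μ]
    (hconv : ∀ f : BoundedContinuousFunction (Fin d → ℝ) ℝ,
      Tendsto (fun n => ∫ ω, f (A n ω) ∂P) atTop (𝓝 (∫ x, f x ∂μ)))
    (hatom : ∀ (j : Fin d) (t : ℝ), μ {y | y j = t} = 0) (j : Fin d) (t : ℝ) :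
    Tendsto (fun n => (P {ω | A n ω j ≤ t}).toReal) atTop (𝓝 ((μ {y | y j ≤ t}).toReal)) := by
  set μs : ℕ → ProbabilityMeasure (Fin d → ℝ) :=
    fun n => ⟨P.map (A n), Measure.isProbabilityMeasure_map (hA n).aemeasurable⟩ with hμs
  set μl : ProbabilityMeasure (Fin d → ℝ) := ⟨μ, inferInstance⟩ with hμl
  have hwk : Tendsto μs atTop (𝓝 μl) := by
    rw [ProbabilityMeasure.tendsto_iff_forall_integral_tendsto]
    intro f
    have heq : ∀ n, ∫ y, f y ∂(μs n : Measure (Fin d → ℝ)) = ∫ ω, f (A n ω) ∂P := by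
      intro n
      exact integral_map (hA n).aemeasurable f.continuous.aestronglyMeasurable
    simp only [heq]
    exact hconv f
  have hnull : (μl : Measure (Fin d → ℝ)) (frontier {y | y j ≤ t}) = 0 := by
    have hsub : frontier {y : Fin d → ℝ | y j ≤ t} ⊆ {y | y j = t} := by
      have hclosed : IsClosed {y : Fin d → ℝ | y j ≤ t} :=
        isClosed_le (continuous_apply j) continuous_const
      have hop : {y : Fin d → ℝ | y j < t} ⊆ interior {y | y j ≤ t} :=
        interior_maximal (fun y (hy : y j < t) => (le_of_lt hy : y ∈ {y | y j ≤ t}))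
          (isOpen_lt (continuous_apply j) continuous_const)
      intro y hy
      rw [frontier, hclosed.closure_eq] at hy
      rcases hy with ⟨h1, h2⟩
      have : ¬ y j < t := fun h => h2 (hop h)
      exact le_antisymm h1 (not_lt.mp this)
    exact measure_mono_null hsub (hatom j t)
  have hfin := ProbabilityMeasure.tendsto_measure_of_null_frontier_of_tendsto' hwk hnull
  have heq2 : ∀ n, (μs n : Measure (Fin d → ℝ)) {y | y j ≤ t} = P {ω | A n ω j ≤ t} := by
    intro n
    rw [hμs]
    simp only [ProbabilityMeasure.coe_mk]
    rw [Measure.map_apply (hA n) (stmt7_margmeas' j t)]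
    rfl
  simp only [heq2] at hfin
  have := (ENNReal.tendsto_toReal (measure_ne_top μ _)).comp hfin
  exact this

-- sub-level sets of a continuous monotone function
lemma stmt7_sublevel {F : ℝ → ℝ} (hcont : Continuous F) (hmono : Monotone F)
    {β : ℝ} (hb : ∃ b, β < F b) (hne : ∃ t, F t ≤ β) :
    ∃ q, {t | F t ≤ β} = Set.Iic q ∧ F q ≤ β := by
  obtain ⟨b, hbb⟩ := hb
  have hclosed : IsClosed {t | F t ≤ β} := isClosed_le hcont continuous_const
  have hbdd : BddAbove {t | F t ≤ β} := by
    refine ⟨b, fun t ht => ?_⟩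
    by_contra hcon
    push_neg at hcon
    exact absurd (le_trans (hmono hcon.le) ht) (not_le.mpr hbb)
  have hqmem : sSup {t | F t ≤ β} ∈ {t | F t ≤ β} := hclosed.csSup_mem hne hbdd
  refine ⟨sSup {t | F t ≤ β}, ?_, hqmem⟩
  ext t
  simp only [Set.mem_setOf_eq, Set.mem_Iic]
  constructor
  · intro ht; exact le_csSup hbdd ht
  · intro ht; exact le_trans (hmono ht) hqmem

lemma stmt7_grid {F : ℝ → ℝ} (hcont : Continuous F) (hmono : Monotone F)
    (hle1 : ∀ t, F t ≤ 1)
    {Fn : ℕ → ℝ → ℝ} (hFn0 : ∀ n t, 0 ≤ Fn n t)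
    (hconv : ∀ t, Tendsto (fun n => Fn n t) atTop (𝓝 (F t)))
    (hbot : ∀ γ : ℝ, 0 < γ → ∃ a, F a ≤ γ) (htop : ∀ γ : ℝ, 0 < γ → ∃ b, 1 - γ ≤ F b)
    {γ : ℝ} (hγ : 0 < γ) :
    ∀ᶠ n in atTop, ∀ t : ℝ, ∃ u, u < t ∧ F t - 3*γ ≤ Fn n u := by
  obtain ⟨a, ha⟩ := hbot γ hγ
  obtain ⟨b0, hb0⟩ := htop γ hγ
  set b : ℝ := max (a+1) b0 with hbdef
  have hab : a < b := lt_of_lt_of_le (by linarith) (le_max_left _ _)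
  have hFb : 1 - γ ≤ F b := le_trans hb0 (hmono (le_max_right _ _))
  have huc := (isCompact_Icc (a := a) (b := b)).uniformContinuousOn_of_continuous
    hcont.continuousOn
  rw [Metric.uniformContinuousOn_iff] at huc
  obtain ⟨δ, hδ, hucδ⟩ := huc γ hγ
  set K : ℕ := ⌈(b - a)/δ⌉₊ + 1 with hKdef
  have hK0 : 0 < K := Nat.succ_pos _
  set step : ℝ := (b - a)/K with hstepdef
  have hstep0 : 0 < step := by
    apply div_pos (by linarith)
    exact_mod_cast hK0
  have hstep : step < δ := by
    rw [hstepdef, div_lt_iff₀ (by exact_mod_cast hK0)]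
    have h1 : (b - a)/δ ≤ (⌈(b - a)/δ⌉₊ : ℝ) := Nat.le_ceil _
    have h2 : ((⌈(b - a)/δ⌉₊ : ℝ)) < K := by
      rw [hKdef]; push_cast; linarith
    have h3 : b - a < (K:ℝ) * δ := (div_lt_iff₀ hδ).mp (lt_of_le_of_lt h1 h2)
    have h4 : (K:ℝ)*δ = δ*(K:ℝ) := mul_comm _ _
    linarith
  set tt : ℕ → ℝ := fun k => a + k*step with httdef
  have htIcc : ∀ k, k ≤ K → tt k ∈ Set.Icc a b := by
    intro k hk
    constructor
    · have : 0 ≤ (k:ℝ)*step := mul_nonneg (by positivity) hstep0.le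
      simp only [httdef]; linarith
    · simp only [httdef]
      have : (k:ℝ)*step ≤ K*step := by
        apply mul_le_mul_of_nonneg_right _ hstep0.le
        exact_mod_cast hk
      have hKs : (K:ℝ)*step = b - a := by
        rw [hstepdef]; field_simp
      linarith
  have htK : tt K = b := by
    simp only [httdef]
    have hKs : (K:ℝ)*step = b - a := by rw [hstepdef]; field_simp
    linarith
  have ht0 : tt 0 = a := by simp [httdef]
  have hev : ∀ᶠ n in atTop, ∀ k ∈ Finset.range (K+1), |Fn n (tt k) - F (tt k)| < γ := by
    rw [Filter.eventually_all_finset]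
    intro k _
    have := Metric.tendsto_nhds.mp (hconv (tt k)) γ hγ
    simpa [Real.dist_eq] using this
  filter_upwards [hev] with n hn
  intro t
  rcases le_or_gt (F t) (3*γ) with hc | hc
  · exact ⟨t - 1, by linarith, by linarith [hFn0 n (t-1)]⟩
  have hat : a < t := by
    by_contra hcon
    push_neg at hcon
    exact absurd (le_trans (hmono hcon) ha) (by linarith)
  set S : Finset ℕ := (Finset.range (K+1)).filter (fun k => tt k < t) with hSdef
  have hSne : S.Nonempty := by
    refine ⟨0, ?_⟩
    simp only [hSdef, Finset.mem_filter, Finset.mem_range, ht0]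
    exact ⟨by omega, hat⟩
  set km : ℕ := S.max' hSne with hkmdef
  have hkmem : km ∈ S := S.max'_mem hSne
  rw [hSdef, Finset.mem_filter, Finset.mem_range] at hkmem
  have hkK : km ≤ K := by omega
  have hklt : tt km < t := hkmem.2
  refine ⟨tt km, hklt, ?_⟩
  have h1 : |Fn n (tt km) - F (tt km)| < γ := hn km (Finset.mem_range.mpr (by omega))
  have h1' : F (tt km) - γ ≤ Fn n (tt km) := by
    rcases abs_lt.mp h1 with ⟨h1a, _⟩; linarith
  have h2 : F t - 2*γ ≤ F (tt km) := by
    rcases eq_or_lt_of_le hkK with hEq | hlt2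
    · rw [hEq, htK]
      have := hle1 t
      linarith
    · have hnotin : t ≤ tt (km+1) := by
        by_contra hcon
        push_neg at hcon
        have hmem : km + 1 ∈ S := by
          rw [hSdef, Finset.mem_filter, Finset.mem_range]
          exact ⟨by omega, hcon⟩
        have := S.le_max' _ hmem
        rw [← hkmdef] at this
        omega
      have hIcc1 : tt km ∈ Set.Icc a b := htIcc km hkK
      have hIcc2 : tt (km+1) ∈ Set.Icc a b := htIcc (km+1) (by omega)
      have hd : dist (tt (km+1)) (tt km) < δ := by
        rw [Real.dist_eq]
        have : tt (km+1) - tt km = step := by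
          simp only [httdef]; push_cast; ring
        rw [this, abs_of_pos hstep0]
        exact hstep
      have h3 := hucδ _ hIcc2 _ hIcc1 hd
      rw [Real.dist_eq] at h3
      have h4 : F t ≤ F (tt (km+1)) := hmono hnotin
      rcases abs_lt.mp h3 with ⟨_, h3b⟩
      linarith
  linarith

lemma stmt7_integrable_of_bounded {α : Type*} [MeasurableSpace α] (μ : Measure α)
    [IsFiniteMeasure μ] {h : α → ℝ} (hm : Measurable h) {C : ℝ} (hb : ∀ a, |h a| ≤ C) :
    Integrable h μ :=
  ⟨hm.aestronglyMeasurable, HasFiniteIntegral.of_bounded (C := C)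
    (ae_of_all _ (by simpa [Real.norm_eq_abs] using hb))⟩

lemma stmt7_pval_measurable {Ω : Type*} [MeasurableSpace Ω] (Mn : ℕ) (S : ℕ → Set Ω)
    (hS : ∀ l, MeasurableSet (S l)) :
    Measurable (fun ω => (1/((Mn:ℝ)+1)) * (1/2 + ∑ l ∈ Finset.Icc 1 Mn,
      if ω ∈ S l then (1:ℝ) else 0)) := by
  apply Measurable.const_mul
  apply Measurable.const_add
  apply Finset.measurable_sum
  intro l _
  exact Measurable.ite (hS l) measurable_const measurable_const

lemma stmt7_pval_nonneg {Ω : Type*} [MeasurableSpace Ω] (Mn : ℕ) (S : ℕ → Set Ω) (ω : Ω) :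
    0 ≤ (1/((Mn:ℝ)+1)) * (1/2 + ∑ l ∈ Finset.Icc 1 Mn, if ω ∈ S l then (1:ℝ) else 0) := by
  apply mul_nonneg (by positivity)
  have : (0:ℝ) ≤ ∑ l ∈ Finset.Icc 1 Mn, if ω ∈ S l then (1:ℝ) else 0 :=
    Finset.sum_nonneg fun l _ => by split <;> norm_num
  linarith

lemma stmt7_pval_le_one {Ω : Type*} [MeasurableSpace Ω] (Mn : ℕ) (S : ℕ → Set Ω) (ω : Ω) :
    (1/((Mn:ℝ)+1)) * (1/2 + ∑ l ∈ Finset.Icc 1 Mn, if ω ∈ S l then (1:ℝ) else 0) ≤ 1 := by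
  have hsum : (∑ l ∈ Finset.Icc 1 Mn, if ω ∈ S l then (1:ℝ) else 0) ≤ Mn := by
    calc (∑ l ∈ Finset.Icc 1 Mn, if ω ∈ S l then (1:ℝ) else 0)
        ≤ ∑ l ∈ Finset.Icc 1 Mn, (1:ℝ) := Finset.sum_le_sum fun l _ => by split <;> norm_num
      _ = Mn := by simp [Nat.card_Icc]
  rw [mul_comm, ← le_div_iff₀ (by positivity : (0:ℝ) < 1/((Mn:ℝ)+1))]
  have : (1:ℝ) / (1/((Mn:ℝ)+1)) = (Mn:ℝ)+1 := by field_simp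
  rw [this]
  linarith

lemma stmt7_pval_integral {Ω : Type*} [MeasurableSpace Ω] (P : Measure Ω)
    [IsProbabilityMeasure P] (Mn : ℕ) (S : ℕ → Set Ω) (hS : ∀ l, MeasurableSet (S l)) :
    ∫ ω, (1/((Mn:ℝ)+1)) * (1/2 + ∑ l ∈ Finset.Icc 1 Mn,
        if ω ∈ S l then (1:ℝ) else 0) ∂P
      = (1/((Mn:ℝ)+1)) * (1/2 + ∑ l ∈ Finset.Icc 1 Mn, (P (S l)).toReal) := by
  rw [integral_const_mul]
  congr 1
  have hint : ∀ l, Integrable (fun ω => if ω ∈ S l then (1:ℝ) else 0) P := by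
    intro l
    apply stmt7_integrable_of_bounded P (Measurable.ite (hS l) measurable_const
      measurable_const) (C := 1)
    intro a
    split <;> norm_num
  rw [integral_add (integrable_const _) (integrable_finset_sum _ fun l _ => hint l),
    integral_finset_sum _ fun l _ => hint l]
  simp only [integral_const, measure_univ, probReal_univ, ENNReal.toReal_one, smul_eq_mul, one_mul]
  congr 1
  apply Finset.sum_congr rfl
  intro l _
  have : (fun ω => if ω ∈ S l then (1:ℝ) else 0) = (S l).indicator (fun _ => 1) := by
    ext ω; simp [Set.indicator_apply]
  rw [this]
  exact integral_indicator_one (μ := P) (hS l)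

/-- Markov tail bound: the p-value exceeds a fixed positive level with vanishing probability
when the per-replicate exceedance probabilities vanish. -/
lemma stmt7_markov_tail {Ω : Type*} [MeasurableSpace Ω] (P : Measure Ω)
    [IsProbabilityMeasure P]
    (M : ℕ → ℕ) (hM : ∀ n, 1 ≤ M n) (hMtop : Tendsto M atTop atTop)
    (S : ℕ → ℕ → Set Ω) (hS : ∀ n l, MeasurableSet (S n l))
    (c : ℕ → ℝ) (hc : ∀ n l, 1 ≤ l → l ≤ M n → (P (S n l)).toReal = c n)
    (hto0 : Tendsto c atTop (𝓝 0)) {q : ℝ} (hq : 0 < q) :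
    Tendsto (fun n => P {ω | q ≤ (1/((M n:ℝ)+1)) * (1/2 + ∑ l ∈ Finset.Icc 1 (M n),
      if ω ∈ S n l then (1:ℝ) else 0)}) atTop (𝓝 0) := by
  set p : ℕ → Ω → ℝ := fun n ω => (1/((M n:ℝ)+1)) * (1/2 + ∑ l ∈ Finset.Icc 1 (M n),
    if ω ∈ S n l then (1:ℝ) else 0) with hp
  set e : ℕ → ℝ := fun n => (1/((M n:ℝ)+1)) * (1/2 + (M n) * c n) with he
  have hcnn : ∀ n, 0 ≤ c n := fun n => (hc n 1 le_rfl (hM n)) ▸ ENNReal.toReal_nonneg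
  have hint : ∀ n, ∫ ω, p n ω ∂P = e n := by
    intro n
    rw [hp, stmt7_pval_integral P (M n) (S n ·) (hS n ·)]
    have hss : ∑ l ∈ Finset.Icc 1 (M n), (P (S n l)).toReal = (M n : ℝ) * c n := by
      have h1 : ∀ l ∈ Finset.Icc 1 (M n), (P (S n l)).toReal = c n := by
        intro l hl
        rw [Finset.mem_Icc] at hl
        exact hc n l hl.1 hl.2
      rw [Finset.sum_congr rfl h1, Finset.sum_const, Nat.card_Icc]
      simp [nsmul_eq_mul]
    rw [hss, he]
  have hmarkov : ∀ n, (P {ω | q ≤ p n ω}).toReal ≤ e n / q := by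
    intro n
    have := mul_meas_ge_le_integral_of_nonneg
      (ae_of_all P (fun ω => stmt7_pval_nonneg (M n) (S n ·) ω))
      (stmt7_integrable_of_bounded P (stmt7_pval_measurable (M n) (S n ·) (hS n ·)) (C := 1)
        (fun ω => by
          rw [abs_of_nonneg (stmt7_pval_nonneg (M n) (S n ·) ω)]
          exact stmt7_pval_le_one (M n) (S n ·) ω)) q
    rw [hint n] at this
    have this' : q * (P {ω | q ≤ p n ω}).toReal ≤ e n := this
    rw [le_div_iff₀ hq]
    linarith
  have hsq0 : ∀ n, 0 ≤ e n := by
    intro n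
    rw [he]
    have : (0:ℝ) ≤ (M n:ℝ) * c n := mul_nonneg (by positivity) (hcnn n)
    positivity
  have he0 : Tendsto e atTop (𝓝 0) := by
    have h1 : Tendsto (fun n => 1/((M n:ℝ)+1)) atTop (𝓝 0) := by
      have := (tendsto_one_div_add_atTop_nhds_zero_nat (𝕜 := ℝ)).comp hMtop
      simpa [Function.comp_def] using this
    have hsq : ∀ n, e n ≤ (1/2) * (1/((M n:ℝ)+1)) + c n := by
      intro n
      rw [he]
      have hM1 : (0:ℝ) < (M n:ℝ)+1 := by positivity
      have hfrac : (M n:ℝ)/((M n:ℝ)+1) ≤ 1 := by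
        rw [div_le_one hM1]; linarith
      have : (1/((M n:ℝ)+1)) * ((M n:ℝ) * c n) ≤ c n := by
        rw [show (1/((M n:ℝ)+1)) * ((M n:ℝ) * c n) = ((M n:ℝ)/((M n:ℝ)+1)) * c n by ring]
        calc ((M n:ℝ)/((M n:ℝ)+1)) * c n ≤ 1 * c n :=
          mul_le_mul_of_nonneg_right hfrac (hcnn n)
        _ = c n := one_mul _
      calc (1/((M n:ℝ)+1)) * (1/2 + (M n) * c n)
          = (1/2) * (1/((M n:ℝ)+1)) + (1/((M n:ℝ)+1)) * ((M n:ℝ) * c n) := by ring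
        _ ≤ (1/2) * (1/((M n:ℝ)+1)) + c n := by linarith
    have hub : Tendsto (fun n => (1/2) * (1/((M n:ℝ)+1)) + c n) atTop (𝓝 0) := by
      have := (h1.const_mul (1/2 : ℝ)).add hto0
      simpa using this
    exact tendsto_of_tendsto_of_tendsto_of_le_of_le tendsto_const_nhds hub hsq0 hsq
  have hub2 : ∀ n, P {ω | q ≤ p n ω} ≤ ENNReal.ofReal (e n / q) := by
    intro n
    rw [ENNReal.le_ofReal_iff_toReal_le (measure_ne_top P _)
      (div_nonneg (hsq0 n) hq.le)]
    exact hmarkov n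
  have hofr : Tendsto (fun n => ENNReal.ofReal (e n / q)) atTop (𝓝 0) := by
    rw [← ENNReal.ofReal_zero]
    apply ENNReal.tendsto_ofReal
    have := he0.div_const q
    simpa using this
  exact tendsto_of_tendsto_of_tendsto_of_le_of_le tendsto_const_nhds hofr
    (fun n => zero_le) hub2

lemma stmt7_integrable_of_bounded' {α : Type*} [MeasurableSpace α] (μ : Measure α)
    [IsFiniteMeasure μ] {h : α → ℝ} (hm : Measurable h) {C : ℝ} (hb : ∀ a, |h a| ≤ C) :
    Integrable h μ :=
  ⟨hm.aestronglyMeasurable, HasFiniteIntegral.of_bounded (C := C)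
    (ae_of_all _ (by simpa [Real.norm_eq_abs] using hb))⟩

/-- Chebyshev-type concentration for the p-value. -/
lemma stmt7_cheby {Ω : Type*} [MeasurableSpace Ω] (P : Measure Ω) [IsProbabilityMeasure P]
    (M : ℕ → ℕ) (hM : ∀ n, 1 ≤ M n) (hMtop : Tendsto M atTop atTop)
    (S : ℕ → ℕ → Set Ω) (hS : ∀ n l, MeasurableSet (S n l))
    (s : ℕ → Ω → ℝ) (hsmeas : ∀ n, Measurable (s n))
    (hs0 : ∀ n ω, 0 ≤ s n ω) (hs1 : ∀ n ω, s n ω ≤ 1)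
    (hcross : ∀ n l k, 1 ≤ l → 1 ≤ k → l ≠ k →
      ∫ ω, ((if ω ∈ S n l then (1:ℝ) else 0) - s n ω)
        * ((if ω ∈ S n k then (1:ℝ) else 0) - s n ω) ∂P = 0)
    {β σ : ℝ} (hσβ : σ < β) (hβhalf : 1/2 ≤ β) :
    Tendsto (fun n => P ({ω | β ≤ (1/((M n:ℝ)+1)) * (1/2 + ∑ l ∈ Finset.Icc 1 (M n),
      if ω ∈ S n l then (1:ℝ) else 0)} ∩ {ω | s n ω < σ})) atTop (𝓝 0) := by
  set a : ℕ → ℕ → Ω → ℝ := fun n l ω => (if ω ∈ S n l then (1:ℝ) else 0) - s n ω with ha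
  set D : ℕ → Ω → ℝ := fun n ω => ∑ l ∈ Finset.Icc 1 (M n), a n l ω with hD
  have hameas : ∀ n l, Measurable (a n l) := fun n l =>
    (Measurable.ite (hS n l) measurable_const measurable_const).sub (hsmeas n)
  have habd : ∀ n l ω, |a n l ω| ≤ 1 := by
    intro n l ω
    have h1 := hs0 n ω
    have h2 := hs1 n ω
    rw [abs_le]
    by_cases h : ω ∈ S n l
    · simp only [ha, if_pos h]
      constructor <;> linarith
    · simp only [ha, if_neg h]
      constructor <;> linarith
  have hDmeas : ∀ n, Measurable (D n) := fun n =>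
    Finset.measurable_sum _ fun l _ => hameas n l
  have haibd : ∀ n l k, Integrable (fun ω => a n l ω * a n k ω) P := by
    intro n l k
    apply stmt7_integrable_of_bounded' P ((hameas n l).mul (hameas n k)) (C := 1)
    intro ω
    rw [Pi.mul_apply, abs_mul]
    calc |a n l ω| * |a n k ω| ≤ 1 * 1 :=
          mul_le_mul (habd n l ω) (habd n k ω) (abs_nonneg _) zero_le_one
      _ = 1 := by norm_num
  have hsqint : ∀ n, ∫ ω, (D n ω)^2 ∂P ≤ (M n : ℝ) := by
    intro n
    have hexp : ∀ ω, (D n ω)^2 = ∑ l ∈ Finset.Icc 1 (M n), ∑ k ∈ Finset.Icc 1 (M n),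
        a n l ω * a n k ω := by
      intro ω
      have h0 : D n ω = ∑ l ∈ Finset.Icc 1 (M n), a n l ω := rfl
      rw [h0, sq, Finset.sum_mul_sum]
    have h1 : ∫ ω, (D n ω)^2 ∂P = ∑ l ∈ Finset.Icc 1 (M n), ∑ k ∈ Finset.Icc 1 (M n),
        ∫ ω, a n l ω * a n k ω ∂P := by
      simp_rw [hexp]
      rw [integral_finset_sum _ fun l _ => integrable_finset_sum _ fun k _ => haibd n l k]
      exact Finset.sum_congr rfl fun l _ => integral_finset_sum _ fun k _ => haibd n l k
    rw [h1]
    have hterm : ∀ l ∈ Finset.Icc 1 (M n), ∀ k ∈ Finset.Icc 1 (M n),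
        ∫ ω, a n l ω * a n k ω ∂P ≤ if l = k then 1 else 0 := by
      intro l hl k hk
      rw [Finset.mem_Icc] at hl hk
      by_cases hlk : l = k
      · rw [if_pos hlk]
        calc ∫ ω, a n l ω * a n k ω ∂P ≤ ∫ (_ : Ω), (1:ℝ) ∂P := by
              apply integral_mono (haibd n l k) (integrable_const _)
              intro ω
              calc a n l ω * a n k ω ≤ |a n l ω * a n k ω| := le_abs_self _
                _ ≤ 1 := by
                    rw [abs_mul]
                    calc |a n l ω| * |a n k ω| ≤ 1 * 1 :=
                          mul_le_mul (habd n l ω) (habd n k ω) (abs_nonneg _) zero_le_one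
                      _ = 1 := by norm_num
          _ = 1 := by simp
      · rw [if_neg hlk, hcross n l k hl.1 hk.1 hlk]
    calc (∑ l ∈ Finset.Icc 1 (M n), ∑ k ∈ Finset.Icc 1 (M n), ∫ ω, a n l ω * a n k ω ∂P)
        ≤ ∑ l ∈ Finset.Icc 1 (M n), ∑ k ∈ Finset.Icc 1 (M n), if l = k then (1:ℝ) else 0 :=
          Finset.sum_le_sum fun l hl => Finset.sum_le_sum fun k hk => hterm l hl k hk
      _ ≤ (M n : ℝ) := by
          have hd : ∀ l ∈ Finset.Icc 1 (M n),
              (∑ k ∈ Finset.Icc 1 (M n), if l = k then (1:ℝ) else 0) = 1 := by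
            intro l hl
            rw [Finset.sum_ite_eq (Finset.Icc 1 (M n)) l (fun _ => (1:ℝ)), if_pos hl]
          rw [Finset.sum_congr rfl hd, Finset.sum_const, Nat.card_Icc]
          simp
  -- event inclusion
  have hincl : ∀ n, {ω | β ≤ (1/((M n:ℝ)+1)) * (1/2 + ∑ l ∈ Finset.Icc 1 (M n),
      if ω ∈ S n l then (1:ℝ) else 0)} ∩ {ω | s n ω < σ}
      ⊆ {ω | ((β - σ)*(M n))^2 ≤ (D n ω)^2} := by
    intro n ω hω
    obtain ⟨h1, h2⟩ := hω
    rw [Set.mem_setOf_eq] at h1 h2 ⊢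
    set T : ℝ := ∑ l ∈ Finset.Icc 1 (M n), if ω ∈ S n l then (1:ℝ) else 0 with hT
    have hM1 : (0:ℝ) < (M n:ℝ)+1 := by positivity
    have hTge : β * (M n) ≤ T := by
      have h3 : β * ((M n:ℝ)+1) ≤ 1/2 + T := by
        have h4 : β ≤ (1/2 + T) / ((M n:ℝ)+1) := by
          rw [div_eq_mul_one_div, mul_comm]
          exact h1
        exact (le_div_iff₀ hM1).mp h4
      nlinarith
    have hDge : (β - σ)*(M n) ≤ D n ω := by
      have hsum : D n ω = T - (M n : ℝ) * s n ω := by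
        have h0 : D n ω = ∑ l ∈ Finset.Icc 1 (M n),
            ((if ω ∈ S n l then (1:ℝ) else 0) - s n ω) := rfl
        rw [h0, Finset.sum_sub_distrib, Finset.sum_const, Nat.card_Icc, ← hT]
        simp [nsmul_eq_mul]
      rw [hsum]
      have h5 : (M n : ℝ) * s n ω ≤ (M n : ℝ) * σ :=
        mul_le_mul_of_nonneg_left h2.le (by positivity)
      nlinarith
    have h0 : (0:ℝ) ≤ (β - σ)*(M n) :=
      mul_nonneg (by linarith) (by positivity)
    nlinarith
  have hDbd : ∀ n ω, |D n ω| ≤ (M n : ℝ) := by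
    intro n ω
    calc |D n ω| ≤ ∑ l ∈ Finset.Icc 1 (M n), |a n l ω| := Finset.abs_sum_le_sum_abs _ _
      _ ≤ ∑ l ∈ Finset.Icc 1 (M n), 1 := Finset.sum_le_sum fun l _ => habd n l ω
      _ = (M n : ℝ) := by simp [Nat.card_Icc]
  -- Markov on D²
  have hmark : ∀ n, (P {ω | ((β - σ)*(M n))^2 ≤ (D n ω)^2}).toReal
      ≤ 1/((β - σ)^2 * (M n)) := by
    intro n
    have hMn0 : (0:ℝ) < (M n : ℝ) := by exact_mod_cast hM n
    have hβσ : (0:ℝ) < β - σ := by linarith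
    have hε : (0:ℝ) < ((β - σ)*(M n))^2 := by positivity
    have hint2 : Integrable (fun ω => (D n ω)^2) P := by
      have hme : Measurable (fun ω => (D n ω)^2) := by
        have he : (fun ω => (D n ω)^2) = fun ω => D n ω * D n ω := by
          ext ω; ring
        rw [he]
        exact (hDmeas n).mul (hDmeas n)
      apply stmt7_integrable_of_bounded' P hme (C := (M n:ℝ)^2)
      intro ω
      rw [abs_of_nonneg (sq_nonneg _)]
      rcases abs_le.mp (hDbd n ω) with ⟨h2, h3⟩
      exact sq_le_sq' (by linarith) h3
    have hm2 := mul_meas_ge_le_integral_of_nonneg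
      (ae_of_all P fun ω => sq_nonneg (D n ω)) hint2 (((β - σ)*(M n))^2)
    have hm3 : ((β - σ)*(M n))^2 * (P {ω | ((β - σ)*(M n))^2 ≤ (D n ω)^2}).toReal
        ≤ (M n : ℝ) := le_trans hm2 (hsqint n)
    set x : ℝ := (P {ω | ((β - σ)*(M n))^2 ≤ (D n ω)^2}).toReal with hx
    have hx0 : 0 ≤ x := ENNReal.toReal_nonneg
    rw [le_div_iff₀ (by positivity)]
    nlinarith [hm3, hx0, hMn0]
  -- conclude
  have hub : ∀ n, P ({ω | β ≤ (1/((M n:ℝ)+1)) * (1/2 + ∑ l ∈ Finset.Icc 1 (M n),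
      if ω ∈ S n l then (1:ℝ) else 0)} ∩ {ω | s n ω < σ})
      ≤ ENNReal.ofReal (1/((β - σ)^2 * (M n))) := by
    intro n
    refine le_trans (measure_mono (hincl n)) ?_
    have hMn0 : (0:ℝ) < (M n : ℝ) := by exact_mod_cast hM n
    have hβσ : (0:ℝ) < β - σ := by linarith
    rw [ENNReal.le_ofReal_iff_toReal_le (measure_ne_top P _) (by positivity)]
    exact hmark n
  have hofr : Tendsto (fun n => ENNReal.ofReal (1/((β - σ)^2 * (M n)))) atTop (𝓝 0) := by
    rw [← ENNReal.ofReal_zero]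
    apply ENNReal.tendsto_ofReal
    have h1 : Tendsto (fun n : ℕ => 1/((M n):ℝ)) atTop (𝓝 0) := by
      have := (tendsto_one_div_atTop_nhds_zero_nat (𝕜 := ℝ)).comp hMtop
      simpa [Function.comp_def] using this
    have h2 := h1.const_mul (1/(β - σ)^2)
    rw [mul_zero] at h2
    apply h2.congr
    intro n
    rw [div_mul_div_comm, one_mul]
  exact tendsto_of_tendsto_of_tendsto_of_le_of_le tendsto_const_nhds hofr
    (fun n => zero_le) hub

lemma stmt7_integrable_of_bounded'' {α : Type*} [MeasurableSpace α] (μ : Measure α)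
    [IsFiniteMeasure μ] {h : α → ℝ} (hm : Measurable h) {C : ℝ} (hb : ∀ a, |h a| ≤ C) :
    Integrable h μ :=
  ⟨hm.aestronglyMeasurable, HasFiniteIntegral.of_bounded (C := C)
    (ae_of_all _ (by simpa [Real.norm_eq_abs] using hb))⟩

lemma stmt7_law_pair {Ω 𝒳 𝒱 : Type*} [MeasurableSpace Ω] [MeasurableSpace 𝒳]
    [MeasurableSpace 𝒱] (P : Measure Ω) [IsProbabilityMeasure P]
    (X : Ω → 𝒳) (hX : Measurable X) (ν : Measure 𝒱)
    (V : ℕ → Ω → 𝒱) (hV : ∀ i, Measurable (V i))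
    (hVlaw : ∀ i, 1 ≤ i → Measure.map (V i) P = ν)
    (hVindepX : IndepFun X (fun ω (i : ℕ) => V (i + 1) ω) P)
    {l : ℕ} (hl : 1 ≤ l) :
    Measure.map (fun ω => (X ω, V l ω)) P = (P.map X).prod ν := by
  obtain ⟨l', rfl⟩ : ∃ l', l = l' + 1 := ⟨l - 1, by omega⟩
  have hindep : IndepFun X (V (l' + 1)) P :=
    hVindepX.comp (measurable_id (α := 𝒳)) (measurable_pi_apply l')
  have hmp := (indepFun_iff_map_prod_eq_prod_map_map hX.aemeasurable
    (hV (l'+1)).aemeasurable).mp hindep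
  rw [hmp, hVlaw (l'+1) (by omega)]

lemma stmt7_law_triple {Ω 𝒳 𝒱 : Type*} [MeasurableSpace Ω] [MeasurableSpace 𝒳]
    [MeasurableSpace 𝒱] (P : Measure Ω) [IsProbabilityMeasure P]
    (X : Ω → 𝒳) (hX : Measurable X) (ν : Measure 𝒱)
    (V : ℕ → Ω → 𝒱) (hV : ∀ i, Measurable (V i))
    (hVlaw : ∀ i, 1 ≤ i → Measure.map (V i) P = ν)
    (hViid : iIndepFun (fun i => V (i + 1)) P)
    (hVindepX : IndepFun X (fun ω (i : ℕ) => V (i + 1) ω) P)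
    {l k : ℕ} (hl : 1 ≤ l) (hk : 1 ≤ k) (hlk : l ≠ k) :
    Measure.map (fun ω => (X ω, (V l ω, V k ω))) P = (P.map X).prod (ν.prod ν) := by
  obtain ⟨l', rfl⟩ : ∃ l', l = l' + 1 := ⟨l - 1, by omega⟩
  obtain ⟨k', rfl⟩ : ∃ k', k = k' + 1 := ⟨k - 1, by omega⟩
  have hVV : IndepFun (V (l'+1)) (V (k'+1)) P :=
    hViid.indepFun (show l' ≠ k' by omega)
  have hmapVV : Measure.map (fun ω => (V (l'+1) ω, V (k'+1) ω)) P = ν.prod ν := by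
    rw [(indepFun_iff_map_prod_eq_prod_map_map (hV (l'+1)).aemeasurable
      (hV (k'+1)).aemeasurable).mp hVV, hVlaw (l'+1) (by omega), hVlaw (k'+1) (by omega)]
  have hindep : IndepFun X (fun ω => (V (l'+1) ω, V (k'+1) ω)) P :=
    hVindepX.comp (measurable_id (α := 𝒳))
      ((measurable_pi_apply l').prodMk (measurable_pi_apply k'))
  rw [(indepFun_iff_map_prod_eq_prod_map_map hX.aemeasurable
    ((hV (l'+1)).prodMk (hV (k'+1))).aemeasurable).mp hindep, hmapVV]

lemma stmt7_cross_zero {Ω 𝒳 𝒱 : Type*} [MeasurableSpace Ω] [MeasurableSpace 𝒳]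
    [MeasurableSpace 𝒱] (P : Measure Ω) [IsProbabilityMeasure P]
    (X : Ω → 𝒳) (hX : Measurable X) (ν : Measure 𝒱) [IsProbabilityMeasure ν]
    (V1 V2 : Ω → 𝒱) (hV1 : Measurable V1) (hV2 : Measurable V2)
    (A : Set (𝒳 × 𝒱)) (hA : MeasurableSet A)
    (hmap : Measure.map (fun ω => (X ω, (V1 ω, V2 ω))) P = (P.map X).prod (ν.prod ν)) :
    ∫ ω, ((if (X ω, V1 ω) ∈ A then (1:ℝ) else 0) - (ν (Prod.mk (X ω) ⁻¹' A)).toReal)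
      * ((if (X ω, V2 ω) ∈ A then (1:ℝ) else 0) - (ν (Prod.mk (X ω) ⁻¹' A)).toReal) ∂P
      = 0 := by
  set sx : 𝒳 → ℝ := fun x => (ν (Prod.mk x ⁻¹' A)).toReal with hsx
  have hsxm : Measurable sx := (measurable_measure_prodMk_left hA).ennreal_toReal
  have hsx0 : ∀ x, 0 ≤ sx x := fun x => ENNReal.toReal_nonneg
  have hsx1 : ∀ x, sx x ≤ 1 := by
    intro x
    rw [hsx]
    exact ENNReal.toReal_le_of_le_ofReal zero_le_one (by simpa using prob_le_one)
  set h : 𝒳 × (𝒱 × 𝒱) → ℝ := fun z =>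
    ((if (z.1, z.2.1) ∈ A then (1:ℝ) else 0) - sx z.1)
      * ((if (z.1, z.2.2) ∈ A then (1:ℝ) else 0) - sx z.1) with hh
  have hmeas1 : MeasurableSet {z : 𝒳 × (𝒱 × 𝒱) | (z.1, z.2.1) ∈ A} :=
    hA.preimage (measurable_fst.prodMk (measurable_fst.comp measurable_snd))
  have hmeas2 : MeasurableSet {z : 𝒳 × (𝒱 × 𝒱) | (z.1, z.2.2) ∈ A} :=
    hA.preimage (measurable_fst.prodMk (measurable_snd.comp measurable_snd))
  have hhm : Measurable h := by
    apply Measurable.mul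
    · exact (Measurable.ite hmeas1 measurable_const measurable_const).sub
        (hsxm.comp measurable_fst)
    · exact (Measurable.ite hmeas2 measurable_const measurable_const).sub
        (hsxm.comp measurable_fst)
  have hfactbd : ∀ (b : Prop) [Decidable b] (x : 𝒳), |(if b then (1:ℝ) else 0) - sx x| ≤ 1 := by
    intro b _ x
    have := hsx0 x
    have := hsx1 x
    rw [abs_le]
    split <;> constructor <;> linarith
  have hhb : ∀ z, |h z| ≤ 1 := by
    intro z
    rw [hh]
    simp only []
    rw [abs_mul]
    calc |(if (z.1, z.2.1) ∈ A then (1:ℝ) else 0) - sx z.1|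
          * |(if (z.1, z.2.2) ∈ A then (1:ℝ) else 0) - sx z.1| ≤ 1 * 1 :=
          mul_le_mul (hfactbd _ _) (hfactbd _ _) (abs_nonneg _) zero_le_one
      _ = 1 := by norm_num
  have hτ : Measurable (fun ω => (X ω, (V1 ω, V2 ω))) := hX.prodMk (hV1.prodMk hV2)
  have hgoal : ∫ ω, ((if (X ω, V1 ω) ∈ A then (1:ℝ) else 0) - sx (X ω))
      * ((if (X ω, V2 ω) ∈ A then (1:ℝ) else 0) - sx (X ω)) ∂P
      = ∫ ω, h (X ω, (V1 ω, V2 ω)) ∂P := rfl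
  rw [hgoal]
  have h1 : ∫ ω, h (X ω, (V1 ω, V2 ω)) ∂P = ∫ z, h z ∂((P.map X).prod (ν.prod ν)) := by
    rw [← hmap, integral_map hτ.aemeasurable hhm.aestronglyMeasurable]
  rw [h1]
  haveI : IsProbabilityMeasure (P.map X) := Measure.isProbabilityMeasure_map hX.aemeasurable
  have hint : Integrable h ((P.map X).prod (ν.prod ν)) :=
    stmt7_integrable_of_bounded'' _ hhm hhb
  rw [integral_prod _ hint]
  have hinner : ∀ x, (∫ vv : 𝒱 × 𝒱, h (x, vv) ∂(ν.prod ν)) = 0 := by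
    intro x
    have hform : (fun vv : 𝒱 × 𝒱 => h (x, vv))
        = fun vv : 𝒱 × 𝒱 => ((fun v => (if (x, v) ∈ A then (1:ℝ) else 0) - sx x) vv.1)
          * ((fun v => (if (x, v) ∈ A then (1:ℝ) else 0) - sx x) vv.2) := rfl
    have hpm := integral_prod_mul (μ := ν) (ν := ν)
      (f := fun v => (if (x, v) ∈ A then (1:ℝ) else 0) - sx x)
      (g := fun v => (if (x, v) ∈ A then (1:ℝ) else 0) - sx x)
    rw [hform, hpm]
    have hzero : (∫ v, ((if (x, v) ∈ A then (1:ℝ) else 0) - sx x) ∂ν) = 0 := by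
      have hintind : Integrable (fun v => if (x, v) ∈ A then (1:ℝ) else 0) ν := by
        apply stmt7_integrable_of_bounded'' ν (Measurable.ite
          (hA.preimage measurable_prodMk_left) measurable_const measurable_const) (C := 1)
        intro v
        split <;> norm_num
      rw [integral_sub hintind (integrable_const _), integral_const]
      have hindeq : (fun v => if (x, v) ∈ A then (1:ℝ) else 0)
          = (Prod.mk x ⁻¹' A).indicator (fun _ => 1) := by
        ext v
        simp [Set.indicator_apply, Set.mem_preimage]
      rw [hindeq]
      have hii := integral_indicator_one (μ := ν)
        (hA.preimage (measurable_prodMk_left (x := x)))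
      rw [show integral ν ((Prod.mk x ⁻¹' A).indicator fun _ => (1:ℝ))
          = (ν (Prod.mk x ⁻¹' A)).toReal from hii]
      simp [hsx]
    rw [hzero, zero_mul]
  simp_rw [hinner]
  simp

/-- the marginal (coordinate-j) discrepancy is bounded by the joint supremum discrepancy -/
lemma stmt7_marg_sup {d : ℕ} {𝒱 Ω' : Type*} [MeasurableSpace 𝒱] [MeasurableSpace Ω']
    (ν : Measure 𝒱) [IsProbabilityMeasure ν] (P : Measure Ω') [IsProbabilityMeasure P]
    (G : 𝒱 → (Fin d → ℝ)) (H : Ω' → (Fin d → ℝ)) (j : Fin d) (u : ℝ) :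
    |(ν {v | G v j ≤ u}).toReal - (P {ω | H ω j ≤ u}).toReal|
      ≤ ⨆ x : Fin d → ℝ,
          |(ν {v | ∀ k, G v k ≤ x k}).toReal - (P {ω | ∀ k, H ω k ≤ x k}).toReal| := by
  have htr1 : ∀ (A : Set 𝒱), (ν A).toReal ≤ 1 := by
    intro A
    rw [show (1:ℝ) = (ν Set.univ).toReal by simp]
    exact ENNReal.toReal_le_toReal (measure_ne_top _ _) (measure_ne_top _ _) |>.mpr
      (measure_mono (Set.subset_univ _))
  have htr2 : ∀ (A : Set Ω'), (P A).toReal ≤ 1 := by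
    intro A
    rw [show (1:ℝ) = (P Set.univ).toReal by simp]
    exact ENNReal.toReal_le_toReal (measure_ne_top _ _) (measure_ne_top _ _) |>.mpr
      (measure_mono (Set.subset_univ _))
  have hbdd : BddAbove (Set.range fun x : Fin d → ℝ =>
      |(ν {v | ∀ k, G v k ≤ x k}).toReal - (P {ω | ∀ k, H ω k ≤ x k}).toReal|) := by
    refine ⟨1, ?_⟩
    rintro y ⟨x, rfl⟩
    rw [abs_le]
    constructor
    · have := htr2 {ω | ∀ k, H ω k ≤ x k}
      have := ENNReal.toReal_nonneg (a := ν {v | ∀ k, G v k ≤ x k})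
      linarith
    · have := htr1 {v | ∀ k, G v k ≤ x k}
      have := ENNReal.toReal_nonneg (a := P {ω | ∀ k, H ω k ≤ x k})
      linarith
  set xx : ℕ → Fin d → ℝ := fun m k => if k = j then u else m with hxx
  have hbound : ∀ m : ℕ,
      |(ν {v | ∀ k, G v k ≤ xx m k}).toReal - (P {ω | ∀ k, H ω k ≤ xx m k}).toReal|
      ≤ ⨆ x : Fin d → ℝ,
          |(ν {v | ∀ k, G v k ≤ x k}).toReal - (P {ω | ∀ k, H ω k ≤ x k}).toReal| :=
    fun m => le_ciSup hbdd (xx m)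
  have hmonoG : Monotone (fun m : ℕ => {z | ∀ k, G z k ≤ xx m k}) := by
    intro m m' hmm z hz k
    have := hz k
    by_cases hk : k = j
    · simpa [hxx, hk] using (by simpa [hxx, hk] using this : G z k ≤ u)
    · simp only [hxx, if_neg hk] at this ⊢
      exact le_trans this (by exact_mod_cast hmm)
  have hunG : (⋃ m : ℕ, {z | ∀ k, G z k ≤ xx m k}) = {z | G z j ≤ u} := by
    ext z
    simp only [Set.mem_iUnion, Set.mem_setOf_eq]
    constructor
    · rintro ⟨m, hm⟩
      have := hm j
      simpa [hxx] using this
    · intro hz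
      obtain ⟨m, hm⟩ := exists_nat_ge ‖G z‖
      refine ⟨m, fun k => ?_⟩
      by_cases hk : k = j
      · simpa [hxx, hk] using hz
      · simp only [hxx, if_neg hk]
        exact le_trans (le_trans (le_abs_self _) (norm_le_pi_norm (G z) k)) hm
  have hmonoH : Monotone (fun m : ℕ => {z | ∀ k, H z k ≤ xx m k}) := by
    intro m m' hmm z hz k
    have := hz k
    by_cases hk : k = j
    · simpa [hxx, hk] using (by simpa [hxx, hk] using this : H z k ≤ u)
    · simp only [hxx, if_neg hk] at this ⊢
      exact le_trans this (by exact_mod_cast hmm)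
  have hunH : (⋃ m : ℕ, {z | ∀ k, H z k ≤ xx m k}) = {z | H z j ≤ u} := by
    ext z
    simp only [Set.mem_iUnion, Set.mem_setOf_eq]
    constructor
    · rintro ⟨m, hm⟩
      have := hm j
      simpa [hxx] using this
    · intro hz
      obtain ⟨m, hm⟩ := exists_nat_ge ‖H z‖
      refine ⟨m, fun k => ?_⟩
      by_cases hk : k = j
      · simpa [hxx, hk] using hz
      · simp only [hxx, if_neg hk]
        exact le_trans (le_trans (le_abs_self _) (norm_le_pi_norm (H z) k)) hm
  have hν : Tendsto (fun m : ℕ => (ν {v | ∀ k, G v k ≤ xx m k}).toReal) atTop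
      (𝓝 ((ν {v | G v j ≤ u}).toReal)) := by
    have h1 := tendsto_measure_iUnion_atTop (μ := ν) hmonoG
    rw [hunG] at h1
    exact (ENNReal.tendsto_toReal (measure_ne_top ν _)).comp h1
  have hP : Tendsto (fun m : ℕ => (P {ω | ∀ k, H ω k ≤ xx m k}).toReal) atTop
      (𝓝 ((P {ω | H ω j ≤ u}).toReal)) := by
    have h1 := tendsto_measure_iUnion_atTop (μ := P) hmonoH
    rw [hunH] at h1
    exact (ENNReal.tendsto_toReal (measure_ne_top P _)).comp h1
  have habs : Tendsto (fun m : ℕ =>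
      |(ν {v | ∀ k, G v k ≤ xx m k}).toReal - (P {ω | ∀ k, H ω k ≤ xx m k}).toReal|) atTop
      (𝓝 (|(ν {v | G v j ≤ u}).toReal - (P {ω | H ω j ≤ u}).toReal|)) :=
    (hν.sub hP).abs
  exact le_of_tendsto habs (Eventually.of_forall hbound)

lemma stmt7_pval_lt_one {Ω : Type*} [MeasurableSpace Ω] (Mn : ℕ) (S : ℕ → Set Ω) (ω : Ω) :
    (1/((Mn:ℝ)+1)) * (1/2 + ∑ l ∈ Finset.Icc 1 Mn, if ω ∈ S l then (1:ℝ) else 0) < 1 := by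
  have hsum : (∑ l ∈ Finset.Icc 1 Mn, if ω ∈ S l then (1:ℝ) else 0) ≤ Mn := by
    calc (∑ l ∈ Finset.Icc 1 Mn, if ω ∈ S l then (1:ℝ) else 0)
        ≤ ∑ l ∈ Finset.Icc 1 Mn, (1:ℝ) := Finset.sum_le_sum fun l _ => by split <;> norm_num
      _ = Mn := by simp [Nat.card_Icc]
  rw [mul_comm, ← lt_div_iff₀ (by positivity : (0:ℝ) < 1/((Mn:ℝ)+1))]
  have : (1:ℝ) / (1/((Mn:ℝ)+1)) = (Mn:ℝ)+1 := by field_simp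
  rw [this]
  linarith

lemma stmt7_pval_pos {Ω : Type*} [MeasurableSpace Ω] (Mn : ℕ) (S : ℕ → Set Ω) (ω : Ω) :
    0 < (1/((Mn:ℝ)+1)) * (1/2 + ∑ l ∈ Finset.Icc 1 Mn, if ω ∈ S l then (1:ℝ) else 0) := by
  apply mul_pos (by positivity)
  have : (0:ℝ) ≤ ∑ l ∈ Finset.Icc 1 Mn, if ω ∈ S l then (1:ℝ) else 0 :=
    Finset.sum_nonneg fun l _ => by split <;> norm_num
  linarith
/-- Convergence in distribution of a sequence of random elements `A n : Ω → E` under `P`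
towards a Borel law `μ` on `E`: for every bounded continuous `f : E → ℝ`,
`∫ f(A_n) dP → ∫ f dμ`. -/
def TendstoInDistribution {Ω E : Type*} [MeasurableSpace Ω] [MeasurableSpace E]
    [TopologicalSpace E] (P : Measure Ω) (A : ℕ → Ω → E) (μ : Measure E) : Prop :=
  ∀ f : BoundedContinuousFunction E ℝ,
    Tendsto (fun n => ∫ ω, f (A n ω) ∂P) atTop (𝓝 (∫ x, f x ∂μ))

/-- In the combining setup with a Stouffer-type combining function
`ψ(p) = Σ_j w_j φ(p_j)`, if there exists `r0 ∈ {1,…,r−1}` such that (a) the first `r0`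
statistics `(T_{n,1},…,T_{n,r0})` converge in distribution to a vector with continuous
c.d.f. and the conditional c.d.f. `Q_n(X_n, ·)` of `(T_{n,1}^{[1]},…,T_{n,r0}^{[1]})`
given the data is uniformly consistent for the c.d.f. of `(T_{n,1},…,T_{n,r0})` in
probability, and (b) for every `j > r0`, `P(T_{n,j}^{[1]} ≥ T_{n,j}) → 0`, then
`W_{n,M_n}^{[0]}` diverges to `+∞` in probability: for every `C ∈ ℝ`,
`P(W_{n,M_n}^{[0]} ≤ C) → 0`. -/
theorem stmt7
    {Ω : Type*} [MeasurableSpace Ω] (P : Measure Ω) [IsProbabilityMeasure P]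
    (r : ℕ) (hr : 1 ≤ r)
    (𝒳 𝒱 : ℕ → Type*) [∀ n, MeasurableSpace (𝒳 n)] [∀ n, MeasurableSpace (𝒱 n)]
    (X : ∀ n, Ω → 𝒳 n) (hXmeas : ∀ n, Measurable (X n))
    (ν : ∀ n, Measure (𝒱 n)) [∀ n, IsProbabilityMeasure (ν n)]
    (V : ∀ n, ℕ → Ω → 𝒱 n) (hVmeas : ∀ n i, Measurable (V n i))
    (hVlaw : ∀ n i, 1 ≤ i → Measure.map (V n i) P = ν n)
    (hViid : ∀ n, iIndepFun
        (fun i => V n (i + 1)) P)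
    (hVindepX : ∀ n, IndepFun (X n) (fun ω (i : ℕ) => V n (i + 1) ω) P)
    (f : ∀ n, 𝒳 n → (Fin r → ℝ)) (hf : ∀ n, Measurable (f n))
    (g : ∀ n, 𝒳 n × 𝒱 n → (Fin r → ℝ)) (hg : ∀ n, Measurable (g n))
    (Trep : ℕ → ℕ → Ω → (Fin r → ℝ))
    (hTrep : ∀ n i ω, Trep n i ω = if i = 0 then f n (X n ω) else g n (X n ω, V n i ω))
    (M : ℕ → ℕ) (hM : ∀ n, 1 ≤ M n) (hMtop : Tendsto M atTop atTop)
    -- ψ of Stouffer type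
    (w : Fin r → ℝ) (hw : ∀ j, 0 < w j)
    (φ : ℝ → ℝ)
    (hφanti : StrictAntiOn φ (Set.Ioo (0 : ℝ) 1))
    (hφnonneg : ∀ x ∈ Set.Ioo (0 : ℝ) (1 / 2), 0 ≤ φ x)
    (hφbij : Set.BijOn φ (Set.Ioo (0 : ℝ) 1) Set.univ)
    -- there exists r0 ∈ {1,…,r−1} such that (a) and (b) hold
    (r0 : ℕ) (hr01 : 1 ≤ r0) (hr0r : r0 < r)
    -- (a) weak convergence of the first r0 statistics to a limit with continuous c.d.f.
    (μ0 : Measure (Fin r0 → ℝ)) [IsProbabilityMeasure μ0]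
    (hconv0 : TendstoInDistribution P
        (fun n ω => fun j : Fin r0 => Trep n 0 ω (Fin.castLE hr0r.le j)) μ0)
    (hcdf0 : Continuous fun x : Fin r0 → ℝ => (μ0 {y | ∀ j, y j ≤ x j}).toReal)
    -- (a) uniform consistency in probability of the conditional c.d.f. Q_n(X_n, ·)
    (hsup : ∀ ε : ℝ, 0 < ε →
        Tendsto (fun n => P {ω | ε ≤
            ⨆ x : Fin r0 → ℝ,
              |(ν n {v | ∀ j : Fin r0,
                    (g n (X n ω, v)) (Fin.castLE hr0r.le j) ≤ x j}).toReal
                - (P {ω' | ∀ j : Fin r0,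
                    Trep n 0 ω' (Fin.castLE hr0r.le j) ≤ x j}).toReal|})
          atTop (𝓝 0))
    -- (b) for every j with r0 ≤ j, P(T_{n,j}^{[1]} ≥ T_{n,j}) → 0
    (hb : ∀ j : Fin r, r0 ≤ (j : ℕ) →
        Tendsto (fun n => (P {ω | Trep n 0 ω j ≤ Trep n 1 ω j}).toReal) atTop (𝓝 0)) :
    ∀ C : ℝ,
      Tendsto (fun n => P {ω |
          (∑ j, w j * φ ((1 / ((M n : ℝ) + 1)) * (1 / 2 + ∑ l ∈ Finset.Icc 1 (M n),
              if Trep n 0 ω j ≤ Trep n l ω j then (1 : ℝ) else 0))) ≤ C})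
        atTop (𝓝 0) := by
  intro C
  -- basic measurability of the statistics
  have hT0eq : ∀ n, (fun ω => Trep n 0 ω) = fun ω => f n (X n ω) := by
    intro n; funext ω; rw [hTrep]; simp
  have hTmeas : ∀ n l, Measurable (fun ω => Trep n l ω) := by
    intro n l
    rcases eq_or_ne l 0 with h | h
    · subst h; rw [hT0eq]; exact (hf n).comp (hXmeas n)
    · have : (fun ω => Trep n l ω) = fun ω => g n (X n ω, V n l ω) := by
        funext ω; rw [hTrep]; simp [h]
      rw [this]; exact (hg n).comp ((hXmeas n).prodMk (hVmeas n l))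
  set S : ℕ → Fin r → ℕ → Set Ω := fun n j l => {ω | Trep n 0 ω j ≤ Trep n l ω j} with hSdef
  have hSmeas : ∀ n j l, MeasurableSet (S n j l) := fun n j l =>
    measurableSet_le ((measurable_pi_apply j).comp (hTmeas n 0))
      ((measurable_pi_apply j).comp (hTmeas n l))
  set p : ℕ → Fin r → Ω → ℝ := fun n j ω => (1/((M n:ℝ)+1)) * (1/2 +
    ∑ l ∈ Finset.Icc 1 (M n), if ω ∈ S n j l then (1:ℝ) else 0) with hpdef
  -- rewriting the goal event in terms of `p`
  have hsetgoal : ∀ n, {ω | (∑ j, w j * φ ((1 / ((M n : ℝ) + 1)) * (1 / 2 +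
      ∑ l ∈ Finset.Icc 1 (M n),
        if Trep n 0 ω j ≤ Trep n l ω j then (1 : ℝ) else 0))) ≤ C}
      = {ω | (∑ j, w j * φ (p n j ω)) ≤ C} := by
    intro n
    ext ω
    simp only [Set.mem_setOf_eq]
    have hpe : ∀ j : Fin r, (1 / ((M n : ℝ) + 1)) * (1/2 + ∑ l ∈ Finset.Icc 1 (M n),
        if Trep n 0 ω j ≤ Trep n l ω j then (1:ℝ) else 0) = p n j ω := by
      intro j
      rw [hpdef]
      congr 2
    rw [show (∑ j, w j * φ ((1 / ((M n : ℝ) + 1)) * (1/2 + ∑ l ∈ Finset.Icc 1 (M n),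
        if Trep n 0 ω j ≤ Trep n l ω j then (1:ℝ) else 0)))
      = ∑ j, w j * φ (p n j ω) from Finset.sum_congr rfl (fun j _ => by rw [hpe j])]
  -- Claim 2 : alternative coordinates
  have claim2 : ∀ j : Fin r, r0 ≤ (j:ℕ) → ∀ q : ℝ, 0 < q →
      Tendsto (fun n => P {ω | q ≤ p n j ω}) atTop (𝓝 0) := by
    intro j hj q hq
    have hc : ∀ n l, 1 ≤ l → l ≤ M n → (P (S n j l)).toReal = (P (S n j 1)).toReal := by
      intro n l hl _
      have hA : MeasurableSet {z : 𝒳 n × 𝒱 n | f n z.1 j ≤ g n z j} :=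
        measurableSet_le ((measurable_pi_apply j).comp ((hf n).comp measurable_fst))
          ((measurable_pi_apply j).comp (hg n))
      have key : ∀ l', 1 ≤ l' → P (S n j l') = ((P.map (X n)).prod (ν n))
          {z : 𝒳 n × 𝒱 n | f n z.1 j ≤ g n z j} := by
        intro l' hl'
        have hpair := stmt7_law_pair P (X n) (hXmeas n) (ν n) (V n) (hVmeas n)
          (hVlaw n) (hVindepX n) hl'
        have hpre : S n j l' = (fun ω => (X n ω, V n l' ω)) ⁻¹'
            {z : 𝒳 n × 𝒱 n | f n z.1 j ≤ g n z j} := by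
          ext ω
          simp only [hSdef, Set.mem_setOf_eq, Set.mem_preimage]
          rw [hTrep n 0 ω, hTrep n l' ω]
          simp [show l' ≠ 0 by omega]
        rw [hpre, ← Measure.map_apply ((hXmeas n).prodMk (hVmeas n l')) hA, hpair]
      rw [key l hl, key 1 le_rfl]
    exact stmt7_markov_tail P M hM hMtop (fun n l => S n j l) (fun n l => hSmeas n j l)
      (fun n => (P (S n j 1)).toReal) hc (hb j hj) hq
  -- Claim 1 : null coordinates
  have hatom : ∀ (k : Fin r0) (t : ℝ), μ0 {y | y k = t} = 0 :=
    fun k t => stmt7_atom μ0 hcdf0 k t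
  have claim1 : ∀ j : Fin r, (j:ℕ) < r0 → ∀ δ : ℝ, 0 < δ →
      ∃ β : ℝ, β ∈ Set.Ioo (0:ℝ) 1 ∧
        ∀ᶠ n in atTop, P {ω | β ≤ p n j ω} ≤ ENNReal.ofReal δ := by
    intro j hj δ hδ
    set j0 : Fin r0 := ⟨(j:ℕ), hj⟩ with hj0
    have hcast : Fin.castLE hr0r.le j0 = j := rfl
    set η : ℝ := min (δ/16) (1/16) with hη
    have hη0 : 0 < η :=
      lt_min (by positivity) (by norm_num)
    have hη16 : η ≤ 1/16 := min_le_right _ _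
    have hηδ : η ≤ δ/16 := min_le_left _ _
    -- marginal cdf of μ0
    set F : ℝ → ℝ := fun t => (μ0 {y | y j0 ≤ t}).toReal with hF
    have hFcont : Continuous F := stmt7_marg_continuous μ0 j0 (hatom j0)
    have hFmono : Monotone F := stmt7_marg_mono μ0 j0
    have hFle1 : ∀ t, F t ≤ 1 := stmt7_marg_le_one μ0 j0
    -- finite-n marginal cdfs and their convergence
    set Fn : ℕ → ℝ → ℝ := fun n t => (P {ω | Trep n 0 ω j ≤ t}).toReal with hFn
    have hFn0 : ∀ n t, 0 ≤ Fn n t := fun n t => ENNReal.toReal_nonneg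
    have hAmeas : ∀ n,
        Measurable (fun ω => fun k : Fin r0 => Trep n 0 ω (Fin.castLE hr0r.le k)) := by
      intro n
      apply measurable_pi_lambda
      intro k
      exact (measurable_pi_apply _).comp (hTmeas n 0)
    have hFnconv : ∀ t, Tendsto (fun n => Fn n t) atTop (𝓝 (F t)) := by
      intro t
      exact stmt7_cdf_conv P (fun n ω => fun k : Fin r0 => Trep n 0 ω (Fin.castLE hr0r.le k))
        hAmeas μ0 hconv0 hatom j0 t
    -- grid approximation
    have hgrid := stmt7_grid hFcont hFmono hFle1 hFn0 hFnconv
      (fun γ hγ => stmt7_marg_bot μ0 j0 hγ) (fun γ hγ => stmt7_marg_top μ0 j0 hγ) hη0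
    -- conditional success probability
    set Aset : (n : ℕ) → Set (𝒳 n × 𝒱 n) := fun n => {z | f n z.1 j ≤ g n z j} with hAset
    have hAsetmeas : ∀ n, MeasurableSet (Aset n) := fun n =>
      measurableSet_le ((measurable_pi_apply j).comp ((hf n).comp measurable_fst))
        ((measurable_pi_apply j).comp (hg n))
    set sfn : ℕ → Ω → ℝ := fun n ω => (ν n (Prod.mk (X n ω) ⁻¹' (Aset n))).toReal with hsfn
    have hsmeas : ∀ n, Measurable (sfn n) := fun n =>
      ((measurable_measure_prodMk_left (hAsetmeas n)).ennreal_toReal).comp (hXmeas n)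
    have hs0 : ∀ n ω, 0 ≤ sfn n ω := fun n ω => ENNReal.toReal_nonneg
    have hs1 : ∀ n ω, sfn n ω ≤ 1 := by
      intro n ω
      rw [hsfn]
      simp only []
      rw [show (1:ℝ) = ((ν n) Set.univ).toReal by simp]
      exact ENNReal.toReal_le_toReal (measure_ne_top _ _) (measure_ne_top _ _) |>.mpr
        (measure_mono (Set.subset_univ _))
    -- cross terms vanish
    have hcross : ∀ n l k, 1 ≤ l → 1 ≤ k → l ≠ k →
        ∫ ω, ((if ω ∈ S n j l then (1:ℝ) else 0) - sfn n ω)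
          * ((if ω ∈ S n j k then (1:ℝ) else 0) - sfn n ω) ∂P = 0 := by
      intro n l k hl hk hlk
      have hmap := stmt7_law_triple P (X n) (hXmeas n) (ν n) (V n) (hVmeas n) (hVlaw n)
        (hViid n) (hVindepX n) hl hk hlk
      have hcz := stmt7_cross_zero P (X n) (hXmeas n) (ν n) (V n l) (V n k)
        (hVmeas n l) (hVmeas n k) (Aset n) (hAsetmeas n) hmap
      have hm1 : (ω : Ω) → ((ω ∈ S n j l) ↔ ((X n ω, V n l ω) ∈ Aset n)) := by
        intro ω
        simp only [hSdef, hAset, Set.mem_setOf_eq]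
        rw [hTrep n 0 ω, hTrep n l ω]
        simp [show l ≠ 0 by omega]
      have hm2 : (ω : Ω) → ((ω ∈ S n j k) ↔ ((X n ω, V n k ω) ∈ Aset n)) := by
        intro ω
        simp only [hSdef, hAset, Set.mem_setOf_eq]
        rw [hTrep n 0 ω, hTrep n k ω]
        simp [show k ≠ 0 by omega]
      have hfeq : (fun ω => ((if ω ∈ S n j l then (1:ℝ) else 0) - sfn n ω)
          * ((if ω ∈ S n j k then (1:ℝ) else 0) - sfn n ω))
          = fun ω => ((if (X n ω, V n l ω) ∈ Aset n then (1:ℝ) else 0)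
              - (ν n (Prod.mk (X n ω) ⁻¹' (Aset n))).toReal)
            * ((if (X n ω, V n k ω) ∈ Aset n then (1:ℝ) else 0)
              - (ν n (Prod.mk (X n ω) ⁻¹' (Aset n))).toReal) := by
        funext ω
        rw [if_congr (hm1 ω) rfl rfl, if_congr (hm2 ω) rfl rfl]
      rw [hfeq]
      exact hcz
    -- Chebyshev part
    set β : ℝ := 1 - η/2 with hβ
    set σ : ℝ := 1 - η with hσ
    have hβσ : σ < β := by rw [hβ, hσ]; linarith
    have hβhalf : 1/2 ≤ β := by rw [hβ]; linarith
    have hcheb := stmt7_cheby P M hM hMtop (fun n l => S n j l) (fun n l => hSmeas n j l)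
      sfn hsmeas hs0 hs1 hcross hβσ hβhalf
    -- supremum discrepancy
    set supd : ℕ → Ω → ℝ := fun n ω => ⨆ x : Fin r0 → ℝ,
      |(ν n {v | ∀ k : Fin r0, (g n (X n ω, v)) (Fin.castLE hr0r.le k) ≤ x k}).toReal
        - (P {ω' | ∀ k : Fin r0, Trep n 0 ω' (Fin.castLE hr0r.le k) ≤ x k}).toReal| with hsupd
    -- key chain
    have hchain : ∀ᶠ n in atTop, ∀ ω, 1 - η ≤ sfn n ω →
        (η ≤ supd n ω ∨ F (Trep n 0 ω j) ≤ 5*η) := by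
      filter_upwards [hgrid] with n hgridn
      intro ω hs
      by_cases hsupb : η ≤ supd n ω
      · exact Or.inl hsupb
      right
      push_neg at hsupb
      obtain ⟨u, hu, hFu⟩ := hgridn (Trep n 0 ω j)
      have hms' : |(ν n {v | g n (X n ω, v) j ≤ u}).toReal - Fn n u| ≤ supd n ω :=
        stmt7_marg_sup (ν n) P
          (fun v => fun k : Fin r0 => g n (X n ω, v) (Fin.castLE hr0r.le k))
          (fun ω' => fun k : Fin r0 => Trep n 0 ω' (Fin.castLE hr0r.le k)) j0 u
      have hdisj : sfn n ω ≤ 1 - (ν n {v | g n (X n ω, v) j ≤ u}).toReal := by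
        have hQmeas : MeasurableSet {v : 𝒱 n | g n (X n ω, v) j ≤ u} :=
          measurableSet_le
            ((measurable_pi_apply j).comp ((hg n).comp measurable_prodMk_left))
            measurable_const
        have ht0 : Trep n 0 ω = f n (X n ω) := by rw [hTrep]; simp
        have hdd : Disjoint (Prod.mk (X n ω) ⁻¹' (Aset n)) {v : 𝒱 n | g n (X n ω, v) j ≤ u} := by
          rw [Set.disjoint_left]
          intro v hv1 hv2
          rw [Set.mem_preimage, hAset, Set.mem_setOf_eq] at hv1
          rw [Set.mem_setOf_eq] at hv2
          rw [ht0] at hu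
          simp only [] at hv1
          linarith
        have hsum := measure_union (μ := ν n) hdd hQmeas
        have hle1 : ν n (Prod.mk (X n ω) ⁻¹' (Aset n)) + ν n {v : 𝒱 n | g n (X n ω, v) j ≤ u}
            ≤ 1 := by
          rw [← hsum]
          exact prob_le_one
        have htr : (ν n (Prod.mk (X n ω) ⁻¹' (Aset n))).toReal
            + (ν n {v : 𝒱 n | g n (X n ω, v) j ≤ u}).toReal ≤ 1 := by
          rw [← ENNReal.toReal_add (measure_ne_top _ _) (measure_ne_top _ _)]
          rw [show (1:ℝ) = (1:ℝ≥0∞).toReal by simp]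
          exact ENNReal.toReal_le_toReal (by
            exact ENNReal.add_ne_top.mpr ⟨measure_ne_top _ _, measure_ne_top _ _⟩)
            (by simp) |>.mpr hle1
        have : sfn n ω = (ν n (Prod.mk (X n ω) ⁻¹' (Aset n))).toReal := rfl
        linarith
      have habs := abs_le.mp hms'
      have hQge : Fn n u - supd n ω ≤ (ν n {v | g n (X n ω, v) j ≤ u}).toReal := by
        linarith [habs.2]
      have hkey : sfn n ω ≤ 1 - F (Trep n 0 ω j) + 3*η + supd n ω := by
        linarith [hFu, hdisj, hQge]
      linarith [hs, hkey, hsupb]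
    -- level-set event
    have h5η : 5*η < 1 := by linarith
    have hFbigevent : ∀ᶠ n in atTop,
        P {ω | F (Trep n 0 ω j) ≤ 5*η} ≤ ENNReal.ofReal (6*η) := by
      by_cases hne : ∃ t, F t ≤ 5*η
      · have hbex : ∃ b, 5*η < F b := by
          obtain ⟨b, hbge⟩ := stmt7_marg_top μ0 j0 (show 0 < (1 - 5*η)/2 by linarith)
          exact ⟨b, by rw [hF]; simp only []; linarith [hbge]⟩
        obtain ⟨qb, hqbset, hqbF⟩ := stmt7_sublevel hFcont hFmono hbex hne
        have hevset : ∀ n, {ω | F (Trep n 0 ω j) ≤ 5*η} = {ω | Trep n 0 ω j ≤ qb} := by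
          intro n
          ext ω
          simp only [Set.mem_setOf_eq]
          constructor
          · intro h
            have hmem : Trep n 0 ω j ∈ {t | F t ≤ 5*η} := h
            rwa [hqbset] at hmem
          · intro h
            have hmem : Trep n 0 ω j ∈ Set.Iic qb := h
            rw [← hqbset] at hmem
            exact hmem
        have hevlt : ∀ᶠ n in atTop, Fn n qb < 6*η :=
          (hFnconv qb).eventually_lt_const (by linarith)
        filter_upwards [hevlt] with n hlt
        rw [hevset n]
        rw [ENNReal.le_ofReal_iff_toReal_le (measure_ne_top P _) (by positivity)]
        exact le_of_lt hlt
      · push_neg at hne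
        apply Eventually.of_forall
        intro n
        have hempty : {ω | F (Trep n 0 ω j) ≤ 5*η} = ∅ := by
          ext ω
          simp only [Set.mem_setOf_eq, Set.mem_empty_iff_false, iff_false, not_le]
          exact hne _
        rw [hempty]
        simp
    -- eventual bounds from hsup and Chebyshev
    have hsupev : ∀ᶠ n in atTop, P {ω | η ≤ supd n ω} ≤ ENNReal.ofReal (δ/4) :=
      ENNReal.tendsto_nhds_zero.mp (hsup η hη0) (ENNReal.ofReal (δ/4)) (by simp [hδ])
    have hchebev : ∀ᶠ n in atTop,
        P ({ω | β ≤ p n j ω} ∩ {ω | sfn n ω < σ}) ≤ ENNReal.ofReal (δ/4) :=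
      ENNReal.tendsto_nhds_zero.mp hcheb (ENNReal.ofReal (δ/4)) (by simp [hδ])
    refine ⟨β, ⟨by rw [hβ]; linarith, by rw [hβ]; linarith⟩, ?_⟩
    filter_upwards [hchain, hsupev, hchebev, hFbigevent] with n hchainn hsupn hchebn hFn6
    have hsub : {ω | β ≤ p n j ω} ⊆ (({ω | β ≤ p n j ω} ∩ {ω | sfn n ω < σ})
        ∪ ({ω | η ≤ supd n ω} ∪ {ω | F (Trep n 0 ω j) ≤ 5*η})) := by
      intro ω hω
      by_cases hsn : sfn n ω < σ
      · exact Or.inl ⟨hω, hsn⟩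
      · push_neg at hsn
        rcases hchainn ω (by rw [hσ] at hsn; exact hsn) with h | h
        · exact Or.inr (Or.inl h)
        · exact Or.inr (Or.inr h)
    calc P {ω | β ≤ p n j ω}
        ≤ P (({ω | β ≤ p n j ω} ∩ {ω | sfn n ω < σ})
          ∪ ({ω | η ≤ supd n ω} ∪ {ω | F (Trep n 0 ω j) ≤ 5*η})) := measure_mono hsub
      _ ≤ P ({ω | β ≤ p n j ω} ∩ {ω | sfn n ω < σ})
          + P ({ω | η ≤ supd n ω} ∪ {ω | F (Trep n 0 ω j) ≤ 5*η}) := measure_union_le _ _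
      _ ≤ P ({ω | β ≤ p n j ω} ∩ {ω | sfn n ω < σ})
          + (P {ω | η ≤ supd n ω} + P {ω | F (Trep n 0 ω j) ≤ 5*η}) := by
            gcongr
            exact measure_union_le _ _
      _ ≤ ENNReal.ofReal (δ/4) + (ENNReal.ofReal (δ/4) + ENNReal.ofReal (6*η)) := by
            gcongr
      _ = ENNReal.ofReal (δ/4 + (δ/4 + 6*η)) := by
            rw [← ENNReal.ofReal_add (by positivity) (by positivity),
              ← ENNReal.ofReal_add (by positivity) (by positivity)]
      _ ≤ ENNReal.ofReal δ := ENNReal.ofReal_le_ofReal (by linarith)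
  -- final assembly
  have hgoalfun : (fun n => P {ω | (∑ j, w j * φ ((1 / ((M n : ℝ) + 1)) * (1 / 2 +
      ∑ l ∈ Finset.Icc 1 (M n),
        if Trep n 0 ω j ≤ Trep n l ω j then (1 : ℝ) else 0))) ≤ C})
      = fun n => P {ω | (∑ j, w j * φ (p n j ω)) ≤ C} :=
    funext fun n => by rw [hsetgoal n]
  rw [hgoalfun, ENNReal.tendsto_nhds_zero]
  intro ε hε
  obtain ⟨δr, hδr0, hδrle⟩ : ∃ δ : ℝ, 0 < δ ∧ ENNReal.ofReal ((r:ℝ) * δ) ≤ ε := by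
    rcases eq_or_ne ε ⊤ with h | h
    · exact ⟨1, one_pos, by simp [h]⟩
    · have hεt : 0 < ε.toReal := ENNReal.toReal_pos hε.ne' h
      refine ⟨ε.toReal / (r+1), by positivity, ?_⟩
      calc ENNReal.ofReal ((r:ℝ) * (ε.toReal / (r+1))) ≤ ENNReal.ofReal ε.toReal := by
            apply ENNReal.ofReal_le_ofReal
            have h1 : (r:ℝ) * (ε.toReal / (r+1)) ≤ ((r:ℝ)+1) * (ε.toReal / (r+1)) := by
              apply mul_le_mul_of_nonneg_right (by linarith) (by positivity)
            have h2 : ((r:ℝ)+1) * (ε.toReal / (r+1)) = ε.toReal := by field_simp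
            linarith
        _ = ε := ENNReal.ofReal_toReal h
  have hchoice : ∀ j : Fin r, ∃ β : ℝ, β ∈ Set.Ioo (0:ℝ) 1 ∧
      ((j:ℕ) < r0 → ∀ᶠ n in atTop, P {ω | β ≤ p n j ω} ≤ ENNReal.ofReal δr) := by
    intro j
    by_cases hj : (j:ℕ) < r0
    · obtain ⟨β, hβIoo, hev⟩ := claim1 j hj δr hδr0
      exact ⟨β, hβIoo, fun _ => hev⟩
    · exact ⟨1/2, by norm_num, fun h => absurd h hj⟩
  choose βf hβIoo hβev using hchoice
  set L : ℝ := ∑ j ∈ Finset.univ.filter (fun j : Fin r => (j:ℕ) < r0), w j * φ (βf j)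
    with hL
  set jstar : Fin r := ⟨r0, hr0r⟩ with hjstar
  have hjstaralt : ¬((jstar:ℕ) < r0) := by simp [hjstar]
  set y : ℝ := max ((C - L + 1)/(w jstar)) (φ (1/4) + 1) with hy
  obtain ⟨q, hqmem, hqy⟩ : ∃ q ∈ Set.Ioo (0:ℝ) 1, φ q = y :=
    hφbij.surjOn (Set.mem_univ y)
  have hφ14 : 0 ≤ φ (1/4 : ℝ) := hφnonneg _ (by norm_num)
  have hφqpos : 0 < φ q := by
    rw [hqy]
    have := le_max_right ((C - L + 1)/(w jstar)) (φ (1/4) + 1)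
    linarith
  set thr : Fin r → ℝ := fun j => if (j:ℕ) < r0 then βf j else q with hthr
  have hthrIoo : ∀ j, thr j ∈ Set.Ioo (0:ℝ) 1 := by
    intro j
    by_cases hj : (j:ℕ) < r0
    · simpa [hthr, hj] using hβIoo j
    · simpa [hthr, hj] using hqmem
  have hallev : ∀ᶠ n in atTop, ∀ j : Fin r, P {ω | thr j ≤ p n j ω} ≤ ENNReal.ofReal δr := by
    rw [eventually_all]
    intro j
    by_cases hj : (j:ℕ) < r0
    · have := hβev j hj
      simp only [hthr, if_pos hj]
      exact this
    · have halt := claim2 j (by omega) q hqmem.1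
      have hev := ENNReal.tendsto_nhds_zero.mp halt (ENNReal.ofReal δr) (by simp [hδr0])
      simp only [hthr, if_neg hj]
      exact hev
  filter_upwards [hallev] with n hn
  have hincl : {ω | (∑ j, w j * φ (p n j ω)) ≤ C}
      ⊆ ⋃ j ∈ (Finset.univ : Finset (Fin r)), {ω | thr j ≤ p n j ω} := by
    intro ω hω
    rw [Set.mem_setOf_eq] at hω
    by_contra hnot
    simp only [Set.mem_iUnion, Set.mem_setOf_eq, not_exists, not_le, Finset.mem_univ] at hnot
    have hplt : ∀ j : Fin r, p n j ω < thr j := by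
      intro j
      have := hnot j
      first
      | exact this
      | exact this trivial
      | exact (this (Finset.mem_univ j))
    have hpIoo : ∀ j, p n j ω ∈ Set.Ioo (0:ℝ) 1 := fun j =>
      ⟨stmt7_pval_pos (M n) (S n j ·) ω, stmt7_pval_lt_one (M n) (S n j ·) ω⟩
    have hnull : ∀ j ∈ Finset.univ.filter (fun j : Fin r => (j:ℕ) < r0),
        w j * φ (βf j) ≤ w j * φ (p n j ω) := by
      intro j hjf
      rw [Finset.mem_filter] at hjf
      have hlt : p n j ω < βf j := by
        simpa [hthr, hjf.2] using hplt j
      have h2 : φ (βf j) < φ (p n j ω) := hφanti (hpIoo j) (hβIoo j) hlt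
      exact mul_le_mul_of_nonneg_left h2.le (hw j).le
    have haltlb : ∀ j ∈ Finset.univ.filter (fun j : Fin r => ¬((j:ℕ) < r0)),
        0 ≤ w j * φ (p n j ω) := by
      intro j hjf
      rw [Finset.mem_filter] at hjf
      have hlt : p n j ω < q := by
        simpa [hthr, hjf.2] using hplt j
      have h2 : φ q < φ (p n j ω) := hφanti (hpIoo j) hqmem hlt
      exact mul_nonneg (hw j).le (by linarith)
    have hjstarmem : jstar ∈ Finset.univ.filter (fun j : Fin r => ¬((j:ℕ) < r0)) := by
      simp [hjstar]
    have hsum : (∑ j, w j * φ (p n j ω)) =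
        (∑ j ∈ Finset.univ.filter (fun j : Fin r => (j:ℕ) < r0), w j * φ (p n j ω))
        + (∑ j ∈ Finset.univ.filter (fun j : Fin r => ¬((j:ℕ) < r0)), w j * φ (p n j ω)) :=
      (Finset.sum_filter_add_sum_filter_not _ _ _).symm
    have h1 : L ≤ ∑ j ∈ Finset.univ.filter (fun j : Fin r => (j:ℕ) < r0),
        w j * φ (p n j ω) := Finset.sum_le_sum hnull
    have h2 : w jstar * φ (p n jstar ω)
        ≤ ∑ j ∈ Finset.univ.filter (fun j : Fin r => ¬((j:ℕ) < r0)), w j * φ (p n j ω) :=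
      Finset.single_le_sum haltlb hjstarmem
    have h3 : C - L + 1 ≤ w jstar * φ (p n jstar ω) := by
      have hltq : p n jstar ω < q := by
        simpa [hthr, hjstaralt] using hplt jstar
      have hq1 : φ q < φ (p n jstar ω) := hφanti (hpIoo jstar) hqmem hltq
      have h4 : (C - L + 1)/(w jstar) ≤ y := le_max_left _ _
      have hwne : w jstar ≠ 0 := (hw jstar).ne'
      have h5 : w jstar * ((C - L + 1)/(w jstar)) = C - L + 1 := by
        field_simp
      calc C - L + 1 = w jstar * ((C - L + 1)/(w jstar)) := h5.symm
        _ ≤ w jstar * y := mul_le_mul_of_nonneg_left h4 (hw jstar).le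
        _ = w jstar * φ q := by rw [hqy]
        _ ≤ w jstar * φ (p n jstar ω) := mul_le_mul_of_nonneg_left hq1.le (hw jstar).le
    linarith
  calc P {ω | (∑ j, w j * φ (p n j ω)) ≤ C}
      ≤ P (⋃ j ∈ (Finset.univ : Finset (Fin r)), {ω | thr j ≤ p n j ω}) :=
        measure_mono hincl
    _ ≤ ∑ j ∈ (Finset.univ : Finset (Fin r)), P {ω | thr j ≤ p n j ω} :=
        measure_biUnion_finset_le _ _
    _ ≤ ∑ _j ∈ (Finset.univ : Finset (Fin r)), ENNReal.ofReal δr :=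
        Finset.sum_le_sum fun j _ => hn j
    _ = (r : ℝ≥0∞) * ENNReal.ofReal δr := by
        rw [Finset.sum_const, Finset.card_univ, Fintype.card_fin, nsmul_eq_mul]
    _ = ENNReal.ofReal ((r:ℝ) * δr) := by
        rw [← ENNReal.ofReal_natCast r, ← ENNReal.ofReal_mul (by positivity)]
    _ ≤ ε := hδrle
end

section
/- Let r ≥ 1 and M ≥ 1 be integers, let w_1, …, w_r be strictly positive reals with w̄ = max_{1≤j≤r} w_j, and let φ : (0,1) → (0,∞) be a decreasing bijection with inverse φ^{-1} : (0,∞) → (0,1). Let t_j^{[i]} ∈ R for j ∈ {1,…,r} and i ∈ {0,1,…,M} be such that for each j the values t_j^{[1]}, …, t_j^{[M]} are pairwise distinct. Define p_j^{[i]} = (1/(M+1)) (1/2 + Σ_{k=1}^{M} 1(t_j^{[k]} ≥ t_j^{[i]})) ∈ (0,1), W^{[i]} = Σ_{j=1}^{r} w_j φ(p_j^{[i]}), and p* = (1/M) Σ_{k=1}^{M} 1(W^{[k]} ≥ W^{[0]}). Then for every j0 ∈ {1,…,r}, p* ≤ r · φ^{-1}( (w_{j0}/(r w̄)) · φ(p_{j0}^{[0]})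 ) + 2r/M. -/
/-- Rank-based approximate p-value of the `i`-th value among `M` bootstrap replicates
`t 1, …, t M` (with the observed statistic being `t 0`). -/
noncomputable def rankPval (M : ℕ) (t : ℕ → ℝ) (i : ℕ) : ℝ :=
  (1 / ((M : ℝ) + 1)) *
    (1 / 2 + ∑ k ∈ Finset.Icc 1 M, if t i ≤ t k then (1 : ℝ) else 0)

lemma rankPval_mem (M : ℕ) (t : ℕ → ℝ) (i : ℕ) :
    rankPval M t i ∈ Set.Ioo (0:ℝ) 1 := by
  unfold rankPval
  have hM1 : (0:ℝ) < (M:ℝ) + 1 := by positivity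
  have hS0 : (0:ℝ) ≤ ∑ k ∈ Finset.Icc 1 M, if t i ≤ t k then (1:ℝ) else 0 :=
    Finset.sum_nonneg fun k _ => by split <;> norm_num
  have hSM : (∑ k ∈ Finset.Icc 1 M, if t i ≤ t k then (1:ℝ) else 0) ≤ M := by
    calc (∑ k ∈ Finset.Icc 1 M, if t i ≤ t k then (1:ℝ) else 0)
        ≤ ∑ k ∈ Finset.Icc 1 M, (1:ℝ) := Finset.sum_le_sum fun k _ => by split <;> norm_num
      _ = M := by simp [Nat.card_Icc]
  constructor
  · apply mul_pos (by positivity); linarith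
  · rw [mul_comm, mul_one_div, div_lt_one hM1]; linarith

lemma count_le (M : ℕ) (t : ℕ → ℝ) (ht : Set.InjOn t (Finset.Icc 1 M))
    (q : ℝ) (hq0 : 0 < q) (hq1 : q ≤ 1) :
    (((Finset.Icc 1 M).filter (fun k => rankPval M t k ≤ q)).card : ℝ) ≤ q * M + 1 := by
  set n : ℕ → ℕ := fun k => ((Finset.Icc 1 M).filter (fun l => t k ≤ t l)).card with hn
  have hval : ∀ k, rankPval M t k = (1 / ((M:ℝ)+1)) * (1/2 + n k) := by
    intro k
    unfold rankPval
    rw [Finset.sum_boole]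
  have hmem : ∀ k ∈ Finset.Icc 1 M, 1 ≤ n k ∧ n k ≤ M := by
    intro k hk
    constructor
    · have : k ∈ (Finset.Icc 1 M).filter (fun l => t k ≤ t l) :=
        Finset.mem_filter.2 ⟨hk, le_refl _⟩
      exact Finset.card_pos.2 ⟨k, this⟩
    · calc n k ≤ (Finset.Icc 1 M).card := Finset.card_le_card (Finset.filter_subset _ _)
        _ = M := by simp [Nat.card_Icc]
  have hlt : ∀ k ∈ Finset.Icc 1 M, ∀ k' ∈ Finset.Icc 1 M, t k < t k' → n k' < n k := by
    intro k hk k' hk' hlt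
    apply Finset.card_lt_card
    constructor
    · intro l hl
      rw [Finset.mem_filter] at hl ⊢
      exact ⟨hl.1, le_trans hlt.le hl.2⟩
    · intro hsub
      have : k ∈ (Finset.Icc 1 M).filter (fun l => t k' ≤ t l) :=
        hsub (Finset.mem_filter.2 ⟨hk, le_refl _⟩)
      rw [Finset.mem_filter] at this
      exact absurd this.2 (not_le.2 hlt)
  have hinj : ∀ k ∈ Finset.Icc 1 M, ∀ k' ∈ Finset.Icc 1 M, n k = n k' → k = k' := by
    intro k hk k' hk' hnn
    by_contra hne
    have htne : t k ≠ t k' := fun h => hne (ht (by simpa using hk) (by simpa using hk') h)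
    rcases lt_or_gt_of_ne htne with h | h
    · exact absurd hnn (hlt k hk k' hk' h).ne'
    · exact absurd hnn (hlt k' hk' k hk h).ne
  set x : ℝ := q * ((M:ℝ)+1) - 1/2 with hx
  set S := (Finset.Icc 1 M).filter (fun k => rankPval M t k ≤ q) with hS
  have hcard : S.card ≤ (Finset.Icc 1 (Nat.floor x)).card := by
    apply Finset.card_le_card_of_injOn n
    · intro k hk
      rw [hS, Finset.mem_coe, Finset.mem_filter] at hk
      obtain ⟨hk1, hk2⟩ := hk
      rw [hval] at hk2
      have hM1 : (0:ℝ) < (M:ℝ)+1 := by positivity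
      have hxk : (n k : ℝ) ≤ x := by
        rw [mul_comm, mul_one_div, div_le_iff₀ hM1] at hk2
        rw [hx]; linarith
      refine Finset.mem_Icc.2 ⟨(hmem k hk1).1, Nat.le_floor hxk⟩
    · intro k hk k' hk' hnn
      rw [Finset.mem_coe, Finset.mem_filter] at hk hk'
      exact hinj k hk.1 k' hk'.1 hnn
  have : (S.card : ℝ) ≤ (Nat.floor x : ℝ) := by
    rw [Nat.card_Icc, Nat.add_sub_cancel] at hcard
    exact_mod_cast hcard
  rcases le_or_gt 0 x with hx0 | hx0
  · have := le_trans this (Nat.floor_le hx0)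
    rw [hx] at this
    nlinarith
  · have : Nat.floor x = 0 := Nat.floor_of_nonpos hx0.le
    rw [this] at hcard
    have : S.card = 0 := Nat.le_zero.1 (by simpa using hcard)
    rw [this]
    have : (0:ℝ) ≤ q * M := by positivity
    push_cast; linarith

/-- Deterministic bound on the approximate p-value of a Fisher-type
combined test: with `p_j^{[i]}` the rank-based approximate p-values,
`W^{[i]} = Σ_j w_j φ(p_j^{[i]})` and `p* = (1/M) Σ_{k=1}^M 1(W^{[k]} ≥ W^{[0]})`, one has,
for every `j0`, `p* ≤ r φ⁻¹((w_{j0}/(r w̄)) φ(p_{j0}^{[0]})) + 2r/M`, provided the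
replicates `t_j^{[1]}, …, t_j^{[M]}` are pairwise distinct for each `j`. Here
`φ : (0,1) → (0,∞)` is a decreasing bijection with inverse `φinv`, the weights `w_j` are
strictly positive, and `w̄ = max_j w_j`. -/
theorem stmt11 (r M : ℕ) (hr : 1 ≤ r) (hM : 1 ≤ M)
    (w : Fin r → ℝ) (hw : ∀ j, 0 < w j)
    (wbar : ℝ) (hwbar : IsGreatest (Set.range w) wbar)
    (φ φinv : ℝ → ℝ)
    (hφanti : StrictAntiOn φ (Set.Ioo 0 1))
    (hφbij : Set.BijOn φ (Set.Ioo (0 : ℝ) 1) (Set.Ioi (0 : ℝ)))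
    (hφinv : Set.InvOn φinv φ (Set.Ioo (0 : ℝ) 1) (Set.Ioi (0 : ℝ)))
    (t : Fin r → ℕ → ℝ)
    (hdistinct : ∀ j, Set.InjOn (t j) (Finset.Icc 1 M))
    (j0 : Fin r) :
    (1 / (M : ℝ)) * (∑ k ∈ Finset.Icc 1 M,
        if (∑ j, w j * φ (rankPval M (t j) 0)) ≤ (∑ j, w j * φ (rankPval M (t j) k))
          then (1 : ℝ) else 0)
      ≤ (r : ℝ) * φinv ((w j0 / ((r : ℝ) * wbar)) * φ (rankPval M (t j0) 0))
          + 2 * r / M := by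
  have hr0 : (0:ℝ) < r := by exact_mod_cast hr
  have hM0 : (0:ℝ) < M := by exact_mod_cast hM
  obtain ⟨j1, hj1⟩ := hwbar.1
  have hwbar0 : 0 < wbar := hj1 ▸ hw j1
  have hwle : ∀ j, w j ≤ wbar := fun j => hwbar.2 ⟨j, rfl⟩
  have hφpos : ∀ j i, 0 < φ (rankPval M (t j) i) := fun j i =>
    hφbij.mapsTo (rankPval_mem M (t j) i)
  set c : ℝ := (w j0 / ((r : ℝ) * wbar)) * φ (rankPval M (t j0) 0) with hc
  have hc0 : 0 < c := by
    apply mul_pos (div_pos (hw j0) (by positivity)) (hφpos j0 0)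
  obtain ⟨p, hp, hpc⟩ := hφbij.surjOn (Set.mem_Ioi.2 hc0)
  have hq : φinv c = p := by rw [← hpc]; exact hφinv.1 hp
  set q : ℝ := φinv c with hqdef
  have hqmem : q ∈ Set.Ioo (0:ℝ) 1 := hq ▸ hp
  have hφq : φ q = c := by rw [hq]; exact hpc
  -- key step: W0 ≤ Wk implies some p-value is ≤ q
  have key : ∀ k, (∑ j, w j * φ (rankPval M (t j) 0)) ≤ (∑ j, w j * φ (rankPval M (t j) k)) →
      ∃ j, rankPval M (t j) k ≤ q := by
    intro k hWk
    by_contra hcon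
    push_neg at hcon
    have hterm : ∀ j, w j * φ (rankPval M (t j) k) < wbar * c := by
      intro j
      have h1 : φ (rankPval M (t j) k) < c := by
        rw [← hφq]
        exact hφanti hqmem (rankPval_mem M (t j) k) (hcon j)
      calc w j * φ (rankPval M (t j) k) ≤ wbar * φ (rankPval M (t j) k) :=
            mul_le_mul_of_nonneg_right (hwle j) (hφpos j k).le
        _ < wbar * c := by exact mul_lt_mul_of_pos_left h1 hwbar0
    have hWklt : (∑ j, w j * φ (rankPval M (t j) k)) < r * wbar * c := by
      calc (∑ j, w j * φ (rankPval M (t j) k)) < ∑ _j : Fin r, wbar * c :=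
            Finset.sum_lt_sum_of_nonempty (Finset.univ_nonempty_iff.2 ⟨j0⟩)
              (fun j _ => hterm j)
        _ = r * wbar * c := by rw [Finset.sum_const]; simp [mul_assoc]
    have hW0ge : w j0 * φ (rankPval M (t j0) 0) ≤ ∑ j, w j * φ (rankPval M (t j) 0) :=
      Finset.single_le_sum (fun j _ => (mul_pos (hw j) (hφpos j 0)).le) (Finset.mem_univ j0)
    have hceq : (r:ℝ) * wbar * c = w j0 * φ (rankPval M (t j0) 0) := by
      rw [hc]; field_simp
    linarith
  -- bound the sum by the counts
  have step1 : (∑ k ∈ Finset.Icc 1 M,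
      if (∑ j, w j * φ (rankPval M (t j) 0)) ≤ (∑ j, w j * φ (rankPval M (t j) k))
        then (1:ℝ) else 0)
      ≤ ∑ j : Fin r, ∑ k ∈ Finset.Icc 1 M, (if rankPval M (t j) k ≤ q then (1:ℝ) else 0) := by
    rw [Finset.sum_comm]
    apply Finset.sum_le_sum
    intro k _
    split
    · next h =>
      obtain ⟨j, hj⟩ := key k h
      have h1 := Finset.single_le_sum
        (f := fun j => if rankPval M (t j) k ≤ q then (1:ℝ) else 0)
        (fun j _ => by split <;> norm_num) (Finset.mem_univ j)
      simpa [if_pos hj] using h1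
    · exact Finset.sum_nonneg fun j _ => by split <;> norm_num
  have step2 : ∀ j : Fin r, (∑ k ∈ Finset.Icc 1 M,
      (if rankPval M (t j) k ≤ q then (1:ℝ) else 0)) ≤ q * M + 1 := by
    intro j
    rw [Finset.sum_boole]
    exact count_le M (t j) (hdistinct j) q hqmem.1 hqmem.2.le
  have step3 : (∑ k ∈ Finset.Icc 1 M,
      if (∑ j, w j * φ (rankPval M (t j) 0)) ≤ (∑ j, w j * φ (rankPval M (t j) k))
        then (1:ℝ) else 0) ≤ r * (q * M + 1) := by
    calc _ ≤ _ := step1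
      _ ≤ ∑ _j : Fin r, (q * M + 1) := Finset.sum_le_sum fun j _ => step2 j
      _ = r * (q * M + 1) := by
          rw [Finset.sum_const, Finset.card_univ, Fintype.card_fin, nsmul_eq_mul]
  have hfinal : (1 / (M:ℝ)) * (r * (q * M + 1)) ≤ r * q + 2 * r / M := by
    have heq : (1 / (M:ℝ)) * (r * (q * M + 1)) = r * q + r / M := by
      field_simp
    have h2 : (0:ℝ) ≤ (r:ℝ) / M := by positivity
    rw [heq, mul_div_assoc]
    linarith
  calc (1 / (M : ℝ)) * (∑ k ∈ Finset.Icc 1 M,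
        if (∑ j, w j * φ (rankPval M (t j) 0)) ≤ (∑ j, w j * φ (rankPval M (t j) k))
          then (1 : ℝ) else 0)
      ≤ (1 / (M:ℝ)) * (r * (q * M + 1)) :=
        mul_le_mul_of_nonneg_left step3 (by positivity)
    _ ≤ r * q + 2 * r / M := hfinal
end
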